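/- arXiv:1407.7920 — 5 statements merged into one kernel-verified Lean document; each statement's English description precedes it below -/
import Mathlib

section
/- If α is a continuous rotationally symmetric norm on L^∞(𝕋), then the α-closure of C(𝕋) (the continuous complex functions on 𝕋) equals L^α(𝕋). -/
open MeasureTheory Filter
open scoped ENNReal Real

noncomputable section

instance fact_two_pi_pos : Fact ((0:ℝ) < 2 * Real.pi) := ⟨by positivity⟩

/-- The circle `𝕋`, modelled additively as `ℝ / 2πℤ`. -/
abbrev 𝕋 : Type := AddCircle (2 * Real.pi)

/-- Normalized Haar (arc-length) probability measure on `𝕋`. -/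
abbrev m : Measure 𝕋 := AddCircle.haarAddCircle

/-- A rotationally symmetric norm on `L^∞(𝕋)`, extended to all measurable functions via
`α f = sup { α s : s simple, |s| ≤ |f| a.e. }`. -/
structure RotNorm where
  α : (𝕋 → ℂ) → ℝ≥0∞
  ae_eq : ∀ f g : 𝕋 → ℂ, f =ᵐ[m] g → α f = α g
  add_le : ∀ f g : 𝕋 → ℂ, α (f + g) ≤ α f + α g
  smul_eq : ∀ (c : ℂ) (f : 𝕋 → ℂ), α (c • f) = (‖c‖₊ : ℝ≥0∞) * α f
  one_eq : α 1 = 1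
  abs_eq : ∀ f : 𝕋 → ℂ, α (fun z => (‖f z‖ : ℂ)) = α f
  rot_eq : ∀ (w : 𝕋) (f : 𝕋 → ℂ), α (fun z => f (z - w)) = α f
  simple_sup : ∀ f : 𝕋 → ℂ, AEMeasurable f m →
    α f = ⨆ (s : SimpleFunc 𝕋 ℂ) (_ : ∀ᵐ z ∂m, ‖s z‖ ≤ ‖f z‖), α s

/-- `α` is in addition a symmetric gauge norm: invariant under all invertible
measure-preserving transformations of `𝕋`. -/
def RotNorm.IsSymmGauge (N : RotNorm) : Prop :=
  ∀ φ : 𝕋 ≃ᵐ 𝕋, MeasurePreserving (⇑φ) m m → ∀ f : 𝕋 → ℂ, N.α (f ∘ ⇑φ) = N.α f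

/-- Continuity of a norm: `α(χ_E) → 0` as `m(E) → 0⁺`. -/
def IsContNorm (γ : (𝕋 → ℂ) → ℝ≥0∞) : Prop :=
  ∀ ε : ℝ≥0∞, 0 < ε → ∃ δ : ℝ≥0∞, 0 < δ ∧
    ∀ E : Set 𝕋, MeasurableSet E → m E < δ → γ (E.indicator fun _ => (1:ℂ)) < ε

/-- Membership in `ℒ^α(𝕋)`: measurable with finite norm. -/
def MemScriptL (γ : (𝕋 → ℂ) → ℝ≥0∞) (f : 𝕋 → ℂ) : Prop :=
  AEMeasurable f m ∧ γ f ≠ ∞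

/-- Membership in `L^α(𝕋)`: the `α`-closure of `L^∞(𝕋)` in `ℒ^α(𝕋)`. -/
def MemL (γ : (𝕋 → ℂ) → ℝ≥0∞) (f : 𝕋 → ℂ) : Prop :=
  MemScriptL γ f ∧ ∀ ε : ℝ≥0∞, 0 < ε → ∃ g : 𝕋 → ℂ, MemLp g ⊤ m ∧ γ (f - g) < ε

/-- Strong continuity: continuity together with `L^α = ℒ^α`. -/
def StronglyCont (γ : (𝕋 → ℂ) → ℝ≥0∞) : Prop :=
  IsContNorm γ ∧ ∀ f : 𝕋 → ℂ, MemScriptL γ f → MemL γ f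

/-- The dual norm `α′`. -/
def dualOf (γ : (𝕋 → ℂ) → ℝ≥0∞) (f : 𝕋 → ℂ) : ℝ≥0∞ :=
  ⨆ (h : 𝕋 → ℂ) (_ : MemLp h ⊤ m) (_ : γ h ≤ 1), ∫⁻ z, (‖f z * h z‖₊ : ℝ≥0∞) ∂m

/-- The linear span of the analytic monomials `zⁿ`, `n ≥ 0`. -/
def analyticPolys : Submodule ℂ (𝕋 → ℂ) :=
  Submodule.span ℂ (Set.range fun n : ℕ => ((fourier (n : ℤ) : C(𝕋, ℂ)) : 𝕋 → ℂ))

/-- Membership in `H^α(𝕋)`: the `α`-closure of the span of `{zⁿ : n ≥ 0}`. -/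
def MemH (γ : (𝕋 → ℂ) → ℝ≥0∞) (f : 𝕋 → ℂ) : Prop :=
  MemScriptL γ f ∧ ∀ ε : ℝ≥0∞, 0 < ε → ∃ p ∈ analyticPolys, γ (f - p) < ε

/-- Membership in the classical Hardy space `H¹(𝕋)`. -/
def MemH1 (f : 𝕋 → ℂ) : Prop :=
  Integrable f m ∧ ∀ n : ℤ, n < 0 → fourierCoeff f n = 0

/-- The point `e^{it}` of the unit circle in `ℂ` corresponding to `t ∈ 𝕋`. -/
def eCirc : 𝕋 → ℂ := fun t => (AddCircle.toCircle t : ℂ)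


-- auxiliary lemmas to insert
namespace RotNormAux

lemma truncBall_contract {M : ℝ} (hM : 0 < M) (x y : ℂ) (hy : ‖y‖ ≤ M) :
    ‖(M / max M ‖x‖) • x - y‖ ≤ ‖x - y‖ := by
  rcases le_or_gt ‖x‖ M with h | h
  · rw [max_eq_left h, div_self hM.ne', one_smul]
  · rw [max_eq_right h.le]
    set c : ℝ := M / ‖x‖ with hc
    have hx0 : (0:ℝ) < ‖x‖ := hM.trans h
    have hc1 : c ≤ 1 := by rw [hc, div_le_one hx0]; exact h.le
    have hc0 : 0 ≤ c := div_nonneg hM.le (norm_nonneg x)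
    have hcx : c * ‖x‖ = M := div_mul_cancel₀ _ hx0.ne'
    have hyc : ‖y‖ ≤ c * ‖x‖ := by rw [hcx]; exact hy
    have hR : (inner ℝ x y : ℝ) ≤ ‖x‖ * ‖y‖ := real_inner_le_norm x y
    have hR2 : (inner ℝ x y : ℝ) ≤ c * (‖x‖ * ‖x‖) := by nlinarith [norm_nonneg x]
    have key : ‖c • x - y‖ ^ 2 ≤ ‖x - y‖ ^ 2 := by
      rw [norm_sub_sq_real, norm_sub_sq_real, real_inner_smul_left, norm_smul,
        Real.norm_eq_abs, abs_of_nonneg hc0, mul_pow]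
      nlinarith [mul_nonneg (sub_nonneg.2 hc1) (sub_nonneg.2 hR2),
        mul_nonneg (mul_nonneg (sub_nonneg.2 hc1) (sub_nonneg.2 hc1)) (sq_nonneg ‖x‖)]
    exact (pow_le_pow_iff_left₀ (norm_nonneg _) (norm_nonneg _) two_ne_zero).1 key

lemma truncBall_norm_le {M : ℝ} (hM : 0 < M) (x : ℂ) : ‖(M / max M ‖x‖) • x‖ ≤ M := by
  have hden : 0 < max M ‖x‖ := lt_max_iff.2 (Or.inl hM)
  rw [norm_smul, Real.norm_eq_abs, abs_of_nonneg (div_nonneg hM.le hden.le), div_mul_eq_mul_div,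
    div_le_iff₀ hden]
  exact mul_le_mul_of_nonneg_left (le_max_right _ _) hM.le

lemma truncBall_continuous {M : ℝ} (hM : 0 < M) :
    Continuous (fun x : ℂ => (M / max M ‖x‖) • x) := by
  refine Continuous.smul (f := fun x : ℂ => M / max M ‖x‖) ?_ continuous_id
  exact continuous_const.div (continuous_const.max continuous_norm)
    (fun x => ne_of_gt (lt_max_iff.2 (Or.inl hM)))

end RotNormAux

lemma RotNorm.mono (N : RotNorm) {u v : 𝕋 → ℂ} (hu : AEMeasurable u m) (hv : AEMeasurable v m)
    (h : ∀ᵐ z ∂m, ‖u z‖ ≤ ‖v z‖) : N.α u ≤ N.α v := by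
  rw [N.simple_sup u hu, N.simple_sup v hv]
  exact iSup₂_le fun s hs =>
    le_iSup₂_of_le s ((hs.and h).mono fun z hz => hz.1.trans hz.2) le_rfl

lemma RotNorm.const_eq (N : RotNorm) (r : ℝ) :
    N.α (fun _ => (r : ℂ)) = ENNReal.ofReal ‖r‖ := by
  have : (fun _ : 𝕋 => (r:ℂ)) = (r:ℂ) • (1 : 𝕋 → ℂ) := by
    funext z; simp
  rw [this, N.smul_eq, N.one_eq, mul_one, ← enorm_eq_nnnorm, ← ofReal_norm, Complex.norm_real]

/-- If α is a continuous rotationally symmetric norm, the α-closure of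
`C(𝕋)` equals `L^α(𝕋)`. -/
theorem continuous_closure_eq_Lalpha
    (N : RotNorm) (hN : IsContNorm N.α) (f : 𝕋 → ℂ) :
    MemL N.α f ↔
      (MemScriptL N.α f ∧ ∀ ε : ℝ≥0∞, 0 < ε → ∃ g : C(𝕋, ℂ), N.α (f - ⇑g) < ε) := by
  constructor
  · rintro ⟨hfs, happrox⟩
    refine ⟨hfs, fun ε hε => ?_⟩
    -- normalize ε
    set ε' : ℝ≥0∞ := min ε 1 with hε'def
    have hε'0 : ε' ≠ 0 := (lt_min hε zero_lt_one).ne'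
    have hε't : ε' ≠ ∞ := ((min_le_right ε 1).trans_lt ENNReal.one_lt_top).ne
    have h3 : (0:ℝ≥0∞) < ε' / 3 := ENNReal.div_pos hε'0 (by norm_num)
    have h3t : ε' / 3 ≠ ∞ := (ENNReal.div_lt_top hε't (by norm_num)).ne
    obtain ⟨g, hg, hfg⟩ := happrox (ε' / 3) h3
    -- a bounded measurable representative of g
    set M0 : ℝ := (eLpNorm g ⊤ m).toReal with hM0
    set M : ℝ := max M0 1 with hMdef
    have hM : (0:ℝ) < M := lt_of_lt_of_le zero_lt_one (le_max_right _ _)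
    have htop : eLpNormEssSup g m ≠ ∞ := by
      rw [← eLpNorm_exponent_top]; exact hg.2.ne
    have hgb : ∀ᵐ z ∂m, ‖g z‖ ≤ M0 := by
      filter_upwards [ae_le_eLpNormEssSup (f := g) (μ := m)] with z hz
      have := ENNReal.toReal_mono htop hz
      simpa [hM0, eLpNorm_exponent_top] using this
    set gm : 𝕋 → ℂ := hg.1.mk g with hgm
    have hgmsm : StronglyMeasurable gm := hg.1.stronglyMeasurable_mk
    set s : Set 𝕋 := {z | ‖gm z‖ ≤ M} with hsdef
    have hsmeas : MeasurableSet s :=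
      measurableSet_le hgmsm.measurable.norm measurable_const
    set g1 : 𝕋 → ℂ := s.indicator gm with hg1def
    have hg1sm : StronglyMeasurable g1 := hgmsm.indicator hsmeas
    have hgg1 : g =ᵐ[m] g1 := by
      filter_upwards [hg.1.ae_eq_mk, hgb] with z hz1 hz2
      have hzs : z ∈ s := by
        simp only [hsdef, Set.mem_setOf_eq, hgm, ← hz1, hMdef]
        exact hz2.trans (le_max_left _ _)
      simp [hg1def, Set.indicator_of_mem hzs, hz1, hgm]
    have hg1b : ∀ z, ‖g1 z‖ ≤ M := by
      intro z
      by_cases hz : z ∈ s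
      · simpa [hg1def, Set.indicator_of_mem hz] using (show ‖gm z‖ ≤ M from hz)
      · simp [hg1def, Set.indicator_of_notMem hz, hM.le]
    -- the quantities η, δ
    set η : ℝ := (ε' / 3).toReal with hηdef
    have hη : 0 < η := ENNReal.toReal_pos h3.ne' h3t
    have hηe : ENNReal.ofReal η = ε' / 3 := ENNReal.ofReal_toReal h3t
    set K : ℝ≥0∞ := (‖((2 * M : ℝ) : ℂ)‖₊ : ℝ≥0∞) + 1 with hKdef
    have hK0 : K ≠ 0 := by
      simp only [hKdef]
      exact (lt_of_lt_of_le zero_lt_one le_add_self).ne'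
    have hKt : K ≠ ∞ := by
      simp only [hKdef]
      exact ENNReal.add_ne_top.2 ⟨ENNReal.coe_ne_top, ENNReal.one_ne_top⟩
    obtain ⟨δ, hδ0, hδ⟩ := hN (ε' / 3 / K) (ENNReal.div_pos h3.ne' hKt)
    set δ'' : ℝ≥0∞ := min δ 1 / 2 with hδ''def
    have hδ''0 : δ'' ≠ 0 := (ENNReal.div_pos (lt_min hδ0 zero_lt_one).ne' (by norm_num)).ne'
    have hδ''δ : δ'' < δ :=
      lt_of_lt_of_le (ENNReal.half_lt_self (lt_min hδ0 zero_lt_one).ne'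
        (((min_le_right δ 1).trans_lt ENNReal.one_lt_top).ne)) (min_le_left _ _)
    -- L¹ approximation of g1 by a bounded continuous function
    have hg1L1 : MemLp g1 1 m :=
      (memLp_top_of_bound hg1sm.aestronglyMeasurable M (ae_of_all _ hg1b)).mono_exponent
        le_top
    have hδ'0 : ENNReal.ofReal η * δ'' ≠ 0 :=
      mul_ne_zero (ENNReal.ofReal_pos.2 hη).ne' hδ''0
    obtain ⟨h, hh1, -⟩ :=
      hg1L1.exists_boundedContinuous_eLpNorm_sub_le ENNReal.one_ne_top hδ'0
    -- truncate h to the ball of radius M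
    set k : 𝕋 → ℂ := fun z => (M / max M ‖h z‖) • h z with hkdef
    have hkcont : Continuous k := (RotNormAux.truncBall_continuous hM).comp h.continuous
    have hkb : ∀ z, ‖k z‖ ≤ M := fun z => RotNormAux.truncBall_norm_le hM (h z)
    have hcontract : ∀ z, ‖g1 z - k z‖ ≤ ‖g1 z - h z‖ := by
      intro z
      rw [norm_sub_rev, norm_sub_rev (g1 z)]
      exact RotNormAux.truncBall_contract hM (h z) (g1 z) (hg1b z)
    -- integral bound
    have hI : ∫⁻ z, (‖g1 z - k z‖₊ : ℝ≥0∞) ∂m ≤ ENNReal.ofReal η * δ'' := by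
      have step : ∫⁻ z, (‖g1 z - k z‖₊ : ℝ≥0∞) ∂m
          ≤ ∫⁻ z, (‖g1 z - (h : 𝕋 → ℂ) z‖₊ : ℝ≥0∞) ∂m := by
        refine lintegral_mono fun z => ?_
        rw [← enorm_eq_nnnorm, ← enorm_eq_nnnorm, ← ofReal_norm, ← ofReal_norm]
        exact ENNReal.ofReal_le_ofReal (hcontract z)
      have eq1 : (∫⁻ z, (‖g1 z - (h : 𝕋 → ℂ) z‖₊ : ℝ≥0∞) ∂m)
          = eLpNorm (g1 - (h : 𝕋 → ℂ)) 1 m := by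
        rw [eLpNorm_one_eq_lintegral_enorm]; rfl
      exact step.trans (eq1.le.trans hh1)
    -- the bad set
    set E : Set 𝕋 := {z | ENNReal.ofReal η ≤ (‖g1 z - k z‖₊ : ℝ≥0∞)} with hEdef
    have hFmeas : Measurable fun z => (‖g1 z - k z‖₊ : ℝ≥0∞) :=
      (hg1sm.measurable.sub hkcont.measurable).enorm
    have hEmeas : MeasurableSet E := measurableSet_le measurable_const hFmeas
    have hmE : m E < δ := by
      have hmark := mul_meas_ge_le_lintegral₀ (μ := m) hFmeas.aemeasurable (ENNReal.ofReal η)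
      have : ENNReal.ofReal η * m E ≤ ENNReal.ofReal η * δ'' := hmark.trans hI
      have hme : m E ≤ δ'' :=
        (ENNReal.mul_le_mul_iff_right (ENNReal.ofReal_pos.2 hη).ne' ENNReal.ofReal_ne_top).1 this
      exact hme.trans_lt hδ''δ
    have hαχ : N.α (E.indicator fun _ => (1:ℂ)) ≤ ε' / 3 / K := (hδ E hEmeas hmE).le
    -- dominating function
    set v : 𝕋 → ℂ :=
      (fun _ => ((η : ℝ) : ℂ)) + ((2 * M : ℝ) : ℂ) • E.indicator (fun _ => (1:ℂ)) with hvdef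
    have hvmeas : Measurable v := by
      exact measurable_const.add ((measurable_const.indicator hEmeas).const_smul _)
    have hdom : ∀ z, ‖g1 z - k z‖ ≤ ‖v z‖ := by
      intro z
      by_cases hz : z ∈ E
      · have h1 : ‖g1 z - k z‖ ≤ 2 * M := by
          calc ‖g1 z - k z‖ ≤ ‖g1 z‖ + ‖k z‖ := norm_sub_le _ _
            _ ≤ M + M := add_le_add (hg1b z) (hkb z)
            _ = 2 * M := by ring
        have : v z = (((η + 2 * M : ℝ)) : ℂ) := by
          simp only [hvdef, Pi.add_apply, Pi.smul_apply, Set.indicator_of_mem hz,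
            smul_eq_mul, mul_one]
          push_cast
          ring
        rw [this, Complex.norm_real, Real.norm_eq_abs, abs_of_nonneg (by positivity)]
        linarith
      · have h2 : ‖g1 z - k z‖ ≤ η := by
          have hz' : ¬ (ENNReal.ofReal η ≤ (‖g1 z - k z‖₊ : ℝ≥0∞)) := hz
          have := not_le.1 hz'
          rw [← enorm_eq_nnnorm, ← ofReal_norm] at this
          exact ((ENNReal.ofReal_lt_ofReal_iff_of_nonneg (norm_nonneg _)).1 this).le
        have : v z = ((η : ℝ) : ℂ) := by
          simp [hvdef, Set.indicator_of_notMem hz]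
        rw [this, Complex.norm_real, Real.norm_eq_abs, abs_of_nonneg hη.le]
        exact h2
    -- put the estimates together
    have hαv : N.α v ≤ ε' / 3 + ε' / 3 := by
      have step1 : N.α v ≤ N.α (fun _ => ((η : ℝ) : ℂ)) +
          N.α (((2 * M : ℝ) : ℂ) • E.indicator (fun _ => (1:ℂ))) := N.add_le _ _
      have e1 : N.α (fun _ => ((η : ℝ) : ℂ)) = ε' / 3 := by
        rw [N.const_eq, Real.norm_eq_abs, abs_of_nonneg hη.le, hηe]
      have e2 : N.α (((2 * M : ℝ) : ℂ) • E.indicator (fun _ => (1:ℂ))) ≤ ε' / 3 := by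
        rw [N.smul_eq]
        calc (‖((2 * M : ℝ) : ℂ)‖₊ : ℝ≥0∞) * N.α (E.indicator fun _ => (1:ℂ))
            ≤ K * (ε' / 3 / K) := mul_le_mul' le_self_add hαχ
          _ = ε' / 3 := ENNReal.mul_div_cancel hK0 hKt
      rw [e1] at step1
      exact step1.trans (add_le_add_right e2 _)
    have hg1k : N.α (g1 - k) ≤ ε' / 3 + ε' / 3 := by
      refine le_trans (N.mono ((hg1sm.measurable.sub hkcont.measurable).aemeasurable)
        hvmeas.aemeasurable (ae_of_all _ fun z => ?_)) hαv
      exact hdom z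
    have hgk : N.α (g - k) ≤ ε' / 3 + ε' / 3 := by
      rw [N.ae_eq (g - k) (g1 - k) (hgg1.sub EventuallyEq.rfl)]
      exact hg1k
    refine ⟨⟨k, hkcont⟩, ?_⟩
    have hsplit : f - k = (f - g) + (g - k) := by
      rw [sub_add_sub_cancel]
    calc N.α (f - k) ≤ N.α (f - g) + N.α (g - k) := by
          rw [hsplit]; exact N.add_le _ _
      _ < ε' / 3 + (ε' / 3 + ε' / 3) := by
          refine ENNReal.add_lt_add_of_lt_of_le ?_ hfg hgk
          exact (hgk.trans_lt (by
            have : ε' / 3 + ε' / 3 < ∞ := by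
              exact ENNReal.add_lt_top.2 ⟨h3t.lt_top, h3t.lt_top⟩
            exact this)).ne
      _ = ε' := by
          have h33 : ε' / 3 * 3 = ε' := ENNReal.div_mul_cancel (by norm_num) (by norm_num)
          calc ε' / 3 + (ε' / 3 + ε' / 3) = ε' / 3 * 3 := by ring
            _ = ε' := h33
      _ ≤ ε := min_le_left _ _
  · rintro ⟨hfs, h⟩
    refine ⟨hfs, fun ε hε => ?_⟩
    obtain ⟨g, hg⟩ := h ε hε
    exact ⟨⇑g, memLp_top_of_bound g.continuous.aestronglyMeasurable ‖g‖
      (Filter.Eventually.of_forall fun x => g.norm_coe_le_norm x), hg⟩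

end
end

section
/- If α is a continuous rotationally symmetric norm on L^∞(𝕋), then (ℒ^α(𝕋), α) is a Banach space, and one has the inclusions L^∞(𝕋) ⊆ L^α(𝕋) ⊆ ℒ^α(𝕋) ⊆ L^1(𝕋). -/
open MeasureTheory Filter
open scoped ENNReal Real

noncomputable section

namespace RotNorm
variable (N : RotNorm)

lemma alpha_zero : N.α 0 = 0 := by
  have h : (0 : 𝕋 → ℂ) = (0:ℂ) • (0 : 𝕋 → ℂ) := by simp
  rw [h, N.smul_eq]; simp

lemma alpha_neg (f : 𝕋 → ℂ) : N.α (-f) = N.α f := by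
  have h : (-f) = (-1:ℂ) • f := by funext z; simp
  rw [h, N.smul_eq]; simp

lemma alpha_const (c : ℂ) : N.α (fun _ => c) = (‖c‖₊ : ℝ≥0∞) := by
  have h : (fun _ : 𝕋 => c) = c • (1 : 𝕋 → ℂ) := by funext z; simp
  rw [h, N.smul_eq, N.one_eq, mul_one]

lemma alpha_sum {ι : Type*} (t : Finset ι) (f : ι → 𝕋 → ℂ) :
    N.α (∑ k ∈ t, f k) ≤ ∑ k ∈ t, N.α (f k) := by
  classical
  induction t using Finset.induction_on with
  | empty => simpa using le_of_eq N.alpha_zero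
  | insert a s hx ih =>
    rw [Finset.sum_insert hx, Finset.sum_insert hx]
    exact le_trans (N.add_le _ _) (add_le_add_right ih _)

lemma alpha_mono {f g : 𝕋 → ℂ} (hf : AEMeasurable f m) (hg : AEMeasurable g m)
    (h : ∀ᵐ z ∂m, ‖f z‖ ≤ ‖g z‖) : N.α f ≤ N.α g := by
  rw [N.simple_sup f hf, N.simple_sup g hg]
  refine iSup₂_le fun s hs => le_iSup₂_of_le s ?_ le_rfl
  filter_upwards [hs, h] with z h1 h2 using h1.trans h2

lemma alpha_simple_le {s : SimpleFunc 𝕋 ℂ} {f : 𝕋 → ℂ} (hf : AEMeasurable f m)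
    (h : ∀ᵐ z ∂m, ‖s z‖ ≤ ‖f z‖) : N.α s ≤ N.α f := by
  rw [N.simple_sup f hf]
  exact le_iSup₂_of_le s h le_rfl

end RotNorm

lemma bdd_integrable {u : 𝕋 → ℝ} (hu : Measurable u) {C : ℝ} (hC : ∀ z, |u z| ≤ C) :
    Integrable u m :=
  (integrable_const C).mono' hu.aestronglyMeasurable (.of_forall (by simpa using hC))

lemma exists_rot_step (h : 𝕋 → ℝ) (hh : Measurable h) (Bh : ℝ) (hB : ∀ z, |h z| ≤ Bh)
    (hmean : ∫ z, h z ∂m = 0) (T : 𝕋 → ℝ) (hT : Measurable T) (BT : ℝ)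
    (hTB : ∀ z, |T z| ≤ BT) :
    ∃ w : 𝕋, ∫ z, (T z + h (z - w))^2 ∂m ≤ (∫ z, (T z)^2 ∂m) + (∫ z, (h z)^2 ∂m) + 1 := by
  have hBh0 : 0 ≤ Bh := (abs_nonneg _).trans (hB 0)
  have hBT0 : 0 ≤ BT := (abs_nonneg _).trans (hTB 0)
  set F : 𝕋 → 𝕋 → ℝ := fun w z => T z * h (z - w) with hF
  have hFmeas : Measurable (Function.uncurry F) :=
    (hT.comp measurable_snd).mul (hh.comp (measurable_snd.sub measurable_fst))
  have hFbdd : ∀ p : 𝕋 × 𝕋, |Function.uncurry F p| ≤ BT * Bh := by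
    intro p
    rw [Function.uncurry, abs_mul]
    exact mul_le_mul (hTB _) (hB _) (abs_nonneg _) hBT0
  have hFint : Integrable (Function.uncurry F) (m.prod m) :=
    (integrable_const (BT * Bh)).mono' hFmeas.aestronglyMeasurable
      (.of_forall (by simpa using hFbdd))
  have hCint : Integrable (fun w => ∫ z, F w z ∂m) m := hFint.integral_prod_left
  have hCzero : ∫ w, ∫ z, F w z ∂m ∂m = 0 := by
    rw [integral_integral_swap hFint]
    have : ∀ z : 𝕋, ∫ w, F w z ∂m = 0 := by
      intro z
      have h1 : ∫ w, T z * h (z - w) ∂m = T z * ∫ w, h (z - w) ∂m := integral_const_mul _ _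
      have h2 : ∫ w, h (z - w) ∂m = ∫ w, h w ∂m := integral_sub_left_eq_self h m z
      simp [hF, h1, h2, hmean]
    simp [this]
  have hex : ∃ w, ∫ z, F w z ∂m ≤ 1/2 := by
    by_contra hcon
    push_neg at hcon
    have hmono : ∫ w, (fun _ : 𝕋 => (1:ℝ)/2) w ∂m ≤ ∫ w, ∫ z, F w z ∂m ∂m :=
      integral_mono (integrable_const _) hCint (fun w => (hcon w).le)
    rw [hCzero] at hmono
    simp at hmono
    linarith
  obtain ⟨w, hw⟩ := hex
  refine ⟨w, ?_⟩
  have hhw : Measurable fun z => h (z - w) := hh.comp (measurable_sub_const w)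
  have hint1 : Integrable (fun z => (T z)^2) m := by
    refine bdd_integrable (hT.pow_const 2) (C := BT^2) fun z => ?_
    rw [abs_pow]
    exact pow_le_pow_left₀ (abs_nonneg _) (hTB z) 2
  have hint2 : Integrable (fun z => T z * h (z - w)) m := by
    refine bdd_integrable (hT.mul hhw) (C := BT * Bh) fun z => ?_
    rw [abs_mul]; exact mul_le_mul (hTB _) (hB _) (abs_nonneg _) hBT0
  have hint3 : Integrable (fun z => (h (z - w))^2) m := by
    refine bdd_integrable (hhw.pow_const 2) (C := Bh^2) fun z => ?_
    rw [abs_pow]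
    exact pow_le_pow_left₀ (abs_nonneg _) (hB _) 2
  have hint23 : Integrable (fun z => 2 * (T z * h (z - w)) + (h (z - w))^2) m := by
    exact (hint2.const_mul 2).add hint3
  have expand : (fun z => (T z + h (z - w))^2)
      = fun z => (T z)^2 + (2 * (T z * h (z - w)) + (h (z - w))^2) := by
    funext z; ring
  have e1 : ∫ z, (T z + h (z - w))^2 ∂m
      = (∫ z, (T z)^2 ∂m) + ((∫ z, 2 * (T z * h (z - w)) ∂m) + ∫ z, (h (z - w))^2 ∂m) := by
    rw [expand, integral_add hint1 hint23, integral_add (hint2.const_mul 2) hint3]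
  have e2 : ∫ z, 2 * (T z * h (z - w)) ∂m = 2 * ∫ z, T z * h (z - w) ∂m :=
    integral_const_mul _ _
  have h3 : ∫ z, (h (z - w))^2 ∂m = ∫ z, (h z)^2 ∂m :=
    integral_sub_right_eq_self (fun z => (h z)^2) w
  have hFw : ∫ z, T z * h (z - w) ∂m ≤ 1/2 := hw
  rw [e1, e2, h3]
  linarith

lemma exists_rots (h : 𝕋 → ℝ) (hh : Measurable h) (Bh : ℝ) (hB : ∀ z, |h z| ≤ Bh)
    (hmean : ∫ z, h z ∂m = 0) :
    ∀ n : ℕ, ∃ w : Fin n → 𝕋,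
      ∫ z, (∑ k, h (z - w k))^2 ∂m ≤ n * ((∫ z, (h z)^2 ∂m) + 1) := by
  have hBh0 : 0 ≤ Bh := (abs_nonneg _).trans (hB 0)
  intro n
  induction n with
  | zero => exact ⟨fun k => 0, by simp⟩
  | succ n ih =>
    obtain ⟨w, hwle⟩ := ih
    set T : 𝕋 → ℝ := fun z => ∑ k, h (z - w k) with hTdef
    have hTmeas : Measurable T :=
      Finset.measurable_sum _ fun k _ => hh.comp (measurable_sub_const (w k))
    have hTB : ∀ z, |T z| ≤ n * Bh := by
      intro z
      calc |T z| ≤ ∑ k, |h (z - w k)| := Finset.abs_sum_le_sum_abs _ _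
        _ ≤ ∑ _k : Fin n, Bh := Finset.sum_le_sum fun k _ => hB _
        _ = n * Bh := by simp [mul_comm]
    obtain ⟨w', hw'⟩ := exists_rot_step h hh Bh hB hmean T hTmeas (n * Bh) hTB
    refine ⟨(Fin.snoc w w' : Fin (n+1) → 𝕋), ?_⟩
    have hsum : ∀ z : 𝕋, (∑ k : Fin (n+1), h (z - (Fin.snoc w w' : Fin (n+1) → 𝕋) k)) = T z + h (z - w') := by
      intro z
      rw [Fin.sum_univ_castSucc]
      simp [hTdef]
    have hV0 : 0 ≤ ∫ z, (h z)^2 ∂m := integral_nonneg fun z => sq_nonneg _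
    calc ∫ z, (∑ k : Fin (n+1), h (z - (Fin.snoc w w' : Fin (n+1) → 𝕋) k))^2 ∂m
        = ∫ z, (T z + h (z - w'))^2 ∂m := by simp_rw [hsum]
      _ ≤ (∫ z, (T z)^2 ∂m) + (∫ z, (h z)^2 ∂m) + 1 := hw'
      _ ≤ n * ((∫ z, (h z)^2 ∂m) + 1) + ((∫ z, (h z)^2 ∂m) + 1) := by linarith
      _ = (n + 1 : ℕ) * ((∫ z, (h z)^2 ∂m) + 1) := by push_cast; ring

lemma exists_cover (g : 𝕋 → ℝ) (hg : Measurable g) (hg0 : ∀ z, 0 ≤ g z) (B : ℝ)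
    (hgB : ∀ z, g z ≤ B) (ht : 0 < ∫ z, g z ∂m) (δ : ℝ) (hδ : 0 < δ) :
    ∃ (n : ℕ) (w : Fin n → 𝕋), 0 < n ∧
      MeasurableSet {z : 𝕋 | (∑ k, g (z - w k)) < n * (∫ z, g z ∂m) / 2} ∧
      (m {z : 𝕋 | (∑ k, g (z - w k)) < n * (∫ z, g z ∂m) / 2}).toReal < δ := by
  set t : ℝ := ∫ z, g z ∂m with htdef
  have hB0 : 0 ≤ B := (hg0 0).trans (hgB 0)
  have hgint : Integrable g m := bdd_integrable hg (C := B) fun z => by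
    rw [abs_of_nonneg (hg0 z)]; exact hgB z
  have htB : t ≤ B := by
    calc t ≤ ∫ _z : 𝕋, B ∂m := integral_mono hgint (integrable_const B) hgB
      _ = B := by simp
  have ht0 : 0 ≤ t := integral_nonneg hg0
  set h : 𝕋 → ℝ := fun z => g z - t with hhdef
  have hh : Measurable h := hg.sub measurable_const
  have hhB : ∀ z, |h z| ≤ B := by
    intro z
    rw [abs_le]
    constructor <;> simp only [hhdef] <;> nlinarith [hg0 z, hgB z]
  have hmean : ∫ z, h z ∂m = 0 := by
    simp only [hhdef]
    rw [integral_sub hgint (integrable_const t)]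
    simp [htdef]
  set V : ℝ := ∫ z, (h z)^2 ∂m with hVdef
  have hV0 : 0 ≤ V := integral_nonneg fun z => sq_nonneg _
  obtain ⟨n0, hn0⟩ := exists_nat_gt (4 * (V + 1) / (t^2 * δ))
  set n : ℕ := n0 + 1 with hndef
  have hnpos : 0 < n := Nat.succ_pos _
  have hngt : (4 * (V + 1)) / (t^2 * δ) < n := by
    have : (n0 : ℝ) ≤ n := by exact_mod_cast Nat.le_succ n0
    linarith
  obtain ⟨w, hw⟩ := exists_rots h hh B hhB hmean n
  refine ⟨n, w, hnpos, ?_, ?_⟩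
  · set S : 𝕋 → ℝ := fun z => ∑ k, g (z - w k) with hSdef
    have hSmeas : Measurable S := Finset.measurable_sum _ fun k _ => hg.comp (measurable_sub_const (w k))
    exact measurableSet_lt hSmeas measurable_const
  · set S : 𝕋 → ℝ := fun z => ∑ k, g (z - w k) with hSdef
    set T : 𝕋 → ℝ := fun z => ∑ k, h (z - w k) with hTdef
    have hST : ∀ z, T z = S z - n * t := by
      intro z
      simp only [hTdef, hSdef, hhdef, Finset.sum_sub_distrib]
      simp [mul_comm]
    have hSmeas : Measurable S := Finset.measurable_sum _ fun k _ => hg.comp (measurable_sub_const (w k))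
    have hTmeas : Measurable T := Finset.measurable_sum _ fun k _ => hh.comp (measurable_sub_const (w k))
    set bad : Set 𝕋 := {z : 𝕋 | S z < n * t / 2} with hbaddef
    have hbadmeas : MeasurableSet bad := measurableSet_lt hSmeas measurable_const
    have hTsqint : Integrable (fun z => (T z)^2) m := by
      refine bdd_integrable (hTmeas.pow_const 2) (C := (n*B)^2) fun z => ?_
      rw [abs_pow]
      refine pow_le_pow_left₀ (abs_nonneg _) ?_ 2
      calc |T z| ≤ ∑ k, |h (z - w k)| := Finset.abs_sum_le_sum_abs _ _
        _ ≤ ∑ _k : Fin n, B := Finset.sum_le_sum fun k _ => hhB _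
        _ = n * B := by simp [mul_comm]
    have hkey : ∀ z ∈ bad, (n * t / 2)^2 ≤ (T z)^2 := by
      intro z hz
      have h1 : S z < n * t / 2 := hz
      have h2 : T z = S z - n * t := hST z
      have hnt0 : 0 ≤ (n:ℝ) * t := mul_nonneg (Nat.cast_nonneg n) ht0
      have ha : 0 ≤ (n:ℝ) * t / 2 - T z := by linarith
      have hb : 0 ≤ -(T z) - (n:ℝ) * t / 2 := by linarith
      nlinarith [mul_nonneg ha hb]
    have hmb : (n * t / 2)^2 * (m bad).toReal ≤ n * (V + 1) := by
      have hle1 : ∫ z in bad, (n * t / 2)^2 ∂m ≤ ∫ z in bad, (T z)^2 ∂m := by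
        refine setIntegral_mono_on (integrableOn_const (measure_lt_top _ _).ne)
          hTsqint.integrableOn hbadmeas hkey
      have hle2 : ∫ z in bad, (T z)^2 ∂m ≤ ∫ z, (T z)^2 ∂m :=
        setIntegral_le_integral hTsqint (.of_forall fun z => sq_nonneg _)
      have hconst : ∫ _z in bad, (n * t / 2)^2 ∂m = (m bad).toReal * (n * t / 2)^2 := by
        rw [setIntegral_const]; simp [smul_eq_mul, measureReal_def]
      rw [hconst] at hle1
      calc (n * t / 2)^2 * (m bad).toReal = (m bad).toReal * (n * t / 2)^2 := by ring
        _ ≤ ∫ z in bad, (T z)^2 ∂m := hle1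
        _ ≤ ∫ z, (T z)^2 ∂m := hle2
        _ ≤ n * (V + 1) := hw
    have hnt : 0 < (n * t / 2)^2 := by positivity
    have hfinal : (m bad).toReal < δ := by
      have hmb' : (m bad).toReal ≤ n * (V + 1) / (n * t / 2)^2 := by
        rw [le_div_iff₀ hnt]
        linarith [hmb]
      have heq : (n:ℝ) * (V + 1) / (n * t / 2)^2 = 4 * (V + 1) / (n * t^2) := by
        field_simp
        ring
      have hlt : 4 * (V + 1) / ((n:ℝ) * t^2) < δ := by
        rw [div_lt_iff₀ (by positivity)]
        rw [div_lt_iff₀ (by positivity)] at hngt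
        nlinarith
      rw [heq] at hmb'
      linarith
    exact hfinal

namespace RotNorm

lemma lintegral_simple_le (N : RotNorm) (hN : IsContNorm N.α) (s : SimpleFunc 𝕋 ℂ) :
    ∫⁻ z, (‖s z‖₊ : ℝ≥0∞) ∂m ≤ 4 * N.α ⇑s := by
  classical
  set g : 𝕋 → ℝ := fun z => ‖s z‖ with hgdef
  have hg : Measurable g := s.measurable.norm
  have hg0 : ∀ z, 0 ≤ g z := fun z => norm_nonneg _
  obtain ⟨B, hgB⟩ : ∃ B, ∀ z, g z ≤ B := by
    obtain ⟨C, hC⟩ := s.exists_forall_norm_le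
    exact ⟨C, hC⟩
  have hgint : Integrable g m := bdd_integrable hg (C := B) fun z => by
    rw [abs_of_nonneg (hg0 z)]; exact hgB z
  set t : ℝ := ∫ z, g z ∂m with htdef
  have ht0 : 0 ≤ t := integral_nonneg hg0
  have hlint : ∫⁻ z, (‖s z‖₊ : ℝ≥0∞) ∂m = ENNReal.ofReal t := by
    simp_rw [← enorm_eq_nnnorm, ← ofReal_norm]
    exact (ofReal_integral_eq_lintegral_ofReal hgint (.of_forall hg0)).symm
  rcases eq_or_lt_of_le ht0 with ht | ht
  · rw [hlint, ← ht]; simp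
  -- continuity: get δ for ε = 1/2
  obtain ⟨δ, hδpos, hδ⟩ := hN (1/2) (by norm_num)
  have hminpos : (0:ℝ≥0∞) < min δ 1 := lt_min hδpos zero_lt_one
  have hminfin : min δ 1 ≠ ∞ := ne_top_of_le_ne_top (by simp) (min_le_right δ 1)
  set δr : ℝ := (min δ 1).toReal with hδrdef
  have hδrpos : 0 < δr := ENNReal.toReal_pos hminpos.ne' hminfin
  obtain ⟨n, w, hnpos, hbadmeas, hbadlt⟩ := exists_cover g hg hg0 B hgB ht δr hδrpos
  set S : 𝕋 → ℝ := fun z => ∑ k, g (z - w k) with hSdef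
  set bad : Set 𝕋 := {z : 𝕋 | S z < n * t / 2} with hbaddef
  have hmbad : m bad < δ := by
    have h1 : m bad < min δ 1 := by
      rw [← ENNReal.ofReal_toReal (measure_ne_top m bad), ← ENNReal.ofReal_toReal hminfin]
      exact (ENNReal.ofReal_lt_ofReal_iff_of_nonneg ENNReal.toReal_nonneg).mpr hbadlt
    exact h1.trans_le (min_le_left δ 1)
  have hχ : N.α (bad.indicator fun _ => (1:ℂ)) ≤ 1/2 := (hδ bad hbadmeas hmbad).le
  set c : ℝ := n * t / 2 with hcdef
  have hc0 : 0 < c := by positivity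
  have hSmeas : Measurable S := Finset.measurable_sum _ fun k _ => hg.comp (measurable_sub_const (w k))
  have hS0 : ∀ z, 0 ≤ S z := fun z => Finset.sum_nonneg fun k _ => hg0 _
  set u : 𝕋 → ℂ := fun _ => ((c:ℝ):ℂ) with hudef
  set vr : 𝕋 → ℝ := fun z => S z + c * bad.indicator (fun _ => (1:ℝ)) z with hvrdef
  set v : 𝕋 → ℂ := fun z => ((vr z : ℝ):ℂ) with hvdef
  have hvrmeas : Measurable vr :=
    hSmeas.add ((measurable_const.indicator hbadmeas).const_mul c)
  have hvmeas : Measurable v := Complex.measurable_ofReal.comp hvrmeas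
  have huv : N.α u ≤ N.α v := by
    refine N.alpha_mono measurable_const.aemeasurable hvmeas.aemeasurable (.of_forall fun z => ?_)
    have hvr0 : c ≤ vr z := by
      by_cases hz : z ∈ bad
      · have : bad.indicator (fun _ => (1:ℝ)) z = 1 := Set.indicator_of_mem hz _
        rw [hvrdef]; simp only [this]
        have := hS0 z
        linarith
      · have h1 : bad.indicator (fun _ => (1:ℝ)) z = 0 := Set.indicator_of_notMem hz _
        have h2 : ¬ (S z < n * t / 2) := hz
        rw [hvrdef]; simp only [h1]
        push_neg at h2
        rw [hcdef]; linarith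
    calc ‖u z‖ = |c| := by simp [hudef]
      _ ≤ |vr z| := by rw [abs_of_nonneg hc0.le, abs_of_nonneg (hc0.le.trans hvr0)]; exact hvr0
      _ = ‖v z‖ := by simp [hvdef]
  have hαu : N.α u = ENNReal.ofReal c := by
    rw [hudef, N.alpha_const]
    simp [← enorm_eq_nnnorm, ← ofReal_norm, abs_of_nonneg hc0.le]
  -- decompose v
  set F : Fin n → 𝕋 → ℂ := fun k => fun z => ((g (z - w k) : ℝ):ℂ) with hFdef
  have hvsplit : v = (∑ k, F k) + fun z => (c:ℂ) • bad.indicator (fun _ => (1:ℂ)) z := by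
    funext z
    simp only [hvdef, hvrdef, Pi.add_apply, Finset.sum_apply, hFdef, hSdef]
    push_cast
    by_cases hz : z ∈ bad
    · simp [Set.indicator_of_mem hz]
    · simp [Set.indicator_of_notMem hz]
  have hαF : ∀ k, N.α (F k) = N.α ⇑s := by
    intro k
    have h1 : N.α (F k) = N.α (fun z => ((g z : ℝ):ℂ)) := N.rot_eq (w k) (fun z => ((g z : ℝ):ℂ))
    rw [h1]
    exact N.abs_eq ⇑s
  have hαv : N.α v ≤ (n : ℝ≥0∞) * N.α ⇑s + ENNReal.ofReal c * N.α (bad.indicator fun _ => (1:ℂ)) := by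
    rw [hvsplit]
    refine le_trans (N.add_le _ _) (add_le_add ?_ ?_)
    · refine le_trans (N.alpha_sum Finset.univ F) ?_
      rw [Finset.sum_congr rfl fun k _ => hαF k]
      simp [Finset.sum_const, mul_comm]
    · have : (fun z => (c:ℂ) • bad.indicator (fun _ => (1:ℂ)) z) = (c:ℂ) • bad.indicator (fun _ => (1:ℂ)) := rfl
      rw [this, N.smul_eq]
      have : ((‖(c:ℂ)‖₊ : ℝ≥0∞)) = ENNReal.ofReal c := by
        simp [← enorm_eq_nnnorm, ← ofReal_norm, abs_of_nonneg hc0.le]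
      rw [this]
  -- put together
  set a : ℝ≥0∞ := ENNReal.ofReal c with hadef
  have ha_ne_top : a ≠ ∞ := ENNReal.ofReal_ne_top
  have hkey : a ≤ (n : ℝ≥0∞) * N.α ⇑s + a / 2 := by
    have h2 : ENNReal.ofReal c * N.α (bad.indicator fun _ => (1:ℂ)) ≤ a * (1/2) :=
      mul_le_mul_right hχ _
    have h3 : a * (1/2) = a / 2 := by rw [mul_one_div]
    calc a = N.α u := hαu.symm
      _ ≤ N.α v := huv
      _ ≤ (n : ℝ≥0∞) * N.α ⇑s + ENNReal.ofReal c * N.α (bad.indicator fun _ => (1:ℂ)) := hαv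
      _ ≤ (n : ℝ≥0∞) * N.α ⇑s + a / 2 := by rw [← h3]; exact add_le_add_right h2 _
  have hhalf : a / 2 ≤ (n : ℝ≥0∞) * N.α ⇑s := by
    rw [← ENNReal.sub_half ha_ne_top]
    exact tsub_le_iff_right.mpr hkey
  -- now a = n * ofReal (t/2)
  have he1 : a = (n : ℝ≥0∞) * ENNReal.ofReal (t/2) := by
    rw [hadef, hcdef, mul_div_assoc, ENNReal.ofReal_mul (Nat.cast_nonneg n), ENNReal.ofReal_natCast]
  have hn0 : (n : ℝ≥0∞) ≠ 0 := Nat.cast_ne_zero.mpr hnpos.ne'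
  have hn_ne_top : (n : ℝ≥0∞) ≠ ∞ := ENNReal.natCast_ne_top n
  have hx : ENNReal.ofReal (t/2) / 2 ≤ N.α ⇑s := by
    have h4 : (n : ℝ≥0∞) * (ENNReal.ofReal (t/2) / 2) ≤ (n : ℝ≥0∞) * N.α ⇑s := by
      rw [← mul_div_assoc]
      rw [he1] at hhalf
      exact hhalf
    exact (ENNReal.mul_le_mul_iff_right hn0 hn_ne_top).mp h4
  have hx2 : ENNReal.ofReal (t/2) ≤ N.α ⇑s * 2 :=
    (ENNReal.div_le_iff_le_mul (Or.inl two_ne_zero) (Or.inl ENNReal.ofNat_ne_top)).mp hx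
  rw [hlint]
  have ht2 : ENNReal.ofReal t = 2 * ENNReal.ofReal (t/2) := by
    rw [← ENNReal.ofReal_ofNat 2, ← ENNReal.ofReal_mul (by norm_num : (0:ℝ) ≤ (2:ℝ))]
    congr 1; ring
  rw [ht2]
  calc 2 * ENNReal.ofReal (t/2) ≤ 2 * (N.α ⇑s * 2) := mul_le_mul_right hx2 2
    _ = 4 * N.α ⇑s := by ring

end RotNorm

namespace RotNorm

lemma lintegral_le (N : RotNorm) (hN : IsContNorm N.α) {f : 𝕋 → ℂ} (hf : AEMeasurable f m) :
    ∫⁻ z, (‖f z‖₊ : ℝ≥0∞) ∂m ≤ 4 * N.α f := by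
  set f' := hf.mk f with hf'def
  have hf'meas : Measurable f' := hf.measurable_mk
  have hae : f =ᵐ[m] f' := hf.ae_eq_mk
  have hα : N.α f = N.α f' := N.ae_eq _ _ hae
  have hli : ∫⁻ z, (‖f z‖₊ : ℝ≥0∞) ∂m = ∫⁻ z, (‖f' z‖₊ : ℝ≥0∞) ∂m :=
    lintegral_congr_ae (hae.mono fun z hz => by simp only []; rw [hz])
  rw [hli, hα]
  set u : 𝕋 → ℝ≥0∞ := fun z => (‖f' z‖₊ : ℝ≥0∞) with hudef
  have hu : Measurable u := hf'meas.nnnorm.coe_nnreal_ennreal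
  rw [lintegral_eq_iSup_eapprox_lintegral hu]
  refine iSup_le fun n => ?_
  set e := SimpleFunc.eapprox u n with hedef
  have helt : ∀ z, e z < ∞ := fun z => SimpleFunc.eapprox_lt_top u n z
  have hele : ∀ z, e z ≤ u z := fun z =>
    le_of_le_of_eq (le_iSup (fun k => SimpleFunc.eapprox u k z) n) (SimpleFunc.iSup_eapprox_apply hu z)
  set sc : SimpleFunc 𝕋 ℂ := e.map (fun x : ℝ≥0∞ => ((x.toReal : ℝ) : ℂ)) with hscdef
  have hscz : ∀ z, sc z = (((e z).toReal : ℝ) : ℂ) := fun z => rfl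
  have hnorm : ∀ z, (‖sc z‖₊ : ℝ≥0∞) = e z := by
    intro z
    rw [hscz z, ← enorm_eq_nnnorm, ← ofReal_norm]
    simp only [Complex.norm_real, Real.norm_eq_abs, abs_of_nonneg ENNReal.toReal_nonneg]
    exact ENNReal.ofReal_toReal (helt z).ne
  have hle : ∀ᵐ z ∂m, ‖sc z‖ ≤ ‖f' z‖ := by
    refine .of_forall fun z => ?_
    rw [hscz z]
    simp only [Complex.norm_real, Real.norm_eq_abs, abs_of_nonneg ENNReal.toReal_nonneg]
    have := ENNReal.toReal_mono (by simp [hudef]) (hele z)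
    simpa [hudef] using this
  have hαs : N.α ⇑sc ≤ N.α f' := N.alpha_simple_le hf'meas.aemeasurable hle
  calc e.lintegral m = ∫⁻ z, e z ∂m := (SimpleFunc.lintegral_eq_lintegral e m).symm
    _ = ∫⁻ z, (‖sc z‖₊ : ℝ≥0∞) ∂m := by simp_rw [hnorm]
    _ ≤ 4 * N.α ⇑sc := N.lintegral_simple_le hN sc
    _ ≤ 4 * N.α f' := mul_le_mul_right hαs _

lemma alpha_le_of_bdd (N : RotNorm) {f : 𝕋 → ℂ} (hf : AEMeasurable f m) {C : ℝ}
    (hC : 0 ≤ C) (h : ∀ᵐ z ∂m, ‖f z‖ ≤ C) : N.α f ≤ ENNReal.ofReal C := by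
  have h1 : N.α f ≤ N.α (fun _ => ((C:ℝ):ℂ)) := by
    refine N.alpha_mono hf measurable_const.aemeasurable ?_
    filter_upwards [h] with z hz
    simpa [abs_of_nonneg hC] using hz
  rw [N.alpha_const] at h1
  refine h1.trans (le_of_eq ?_)
  simp [← enorm_eq_nnnorm, ← ofReal_norm, abs_of_nonneg hC]

end RotNorm

namespace RotNorm

lemma fatou (N : RotNorm) (hN : IsContNorm N.α) {g : ℕ → 𝕋 → ℂ} {f : 𝕋 → ℂ}
    (hg : ∀ k, AEMeasurable (g k) m) (hf : AEMeasurable f m)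
    (hconv : ∀ᵐ z ∂m, Tendsto (fun k => g k z) atTop (nhds (f z))) :
    N.α f ≤ Filter.liminf (fun k => N.α (g k)) atTop := by
  classical
  set L := Filter.liminf (fun k => N.α (g k)) atTop with hLdef
  rw [N.simple_sup f hf]
  refine iSup₂_le fun s hs => ?_
  refine ENNReal.le_of_forall_lt_one_mul_le fun a ha => ?_
  rcases eq_or_ne a 0 with rfl | ha0
  · simp
  have ha_ne_top : a ≠ ∞ := ha.ne_top
  set θ : ℝ := a.toReal with hθdef
  have hθpos : 0 < θ := ENNReal.toReal_pos ha0 ha_ne_top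
  have hθlt : θ < 1 := by
    rw [hθdef, ← ENNReal.toReal_one]
    exact (ENNReal.toReal_lt_toReal ha_ne_top ENNReal.one_ne_top).mpr ha
  have haθ : a = ENNReal.ofReal θ := (ENNReal.ofReal_toReal ha_ne_top).symm
  -- measurable versions
  set g' : ℕ → 𝕋 → ℂ := fun k => (hg k).mk (g k) with hg'def
  have hg'meas : ∀ k, Measurable (g' k) := fun k => (hg k).measurable_mk
  have hg'ae : ∀ k, g k =ᵐ[m] g' k := fun k => (hg k).ae_eq_mk
  set E : ℕ → Set 𝕋 := fun k => ⋂ (j : ℕ) (_ : k ≤ j), {z | θ * ‖s z‖ ≤ ‖g' j z‖} with hEdef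
  have hEmeas : ∀ k, MeasurableSet (E k) := by
    intro k
    refine MeasurableSet.iInter fun j => MeasurableSet.iInter fun _ => ?_
    exact measurableSet_le (s.measurable.norm.const_mul θ) (hg'meas j).norm
  have hEmono : Monotone E := by
    intro k k' hkk' z hz
    exact Set.mem_iInter₂.mpr fun j hj => Set.mem_iInter₂.mp hz j (hkk'.trans hj)
  have hcover : ∀ᵐ z ∂m, z ∈ ⋃ k, E k := by
    have hall : ∀ᵐ z ∂m, ∀ j, g j z = g' j z := ae_all_iff.mpr hg'ae
    filter_upwards [hconv, hs, hall] with z hz hsz hallz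
    rcases eq_or_lt_of_le (norm_nonneg (s z)) with h0 | h0
    · refine Set.mem_iUnion.mpr ⟨0, ?_⟩
      refine Set.mem_iInter₂.mpr fun j _ => ?_
      simp only [Set.mem_setOf_eq, ← h0, mul_zero]
      exact norm_nonneg _
    · have hlt : θ * ‖s z‖ < ‖f z‖ := by nlinarith
      have hnt : Tendsto (fun k => ‖g k z‖) atTop (nhds ‖f z‖) := hz.norm
      have hev : ∀ᶠ k in atTop, θ * ‖s z‖ < ‖g k z‖ := hnt.eventually_const_lt hlt
      obtain ⟨k, hk⟩ := eventually_atTop.mp hev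
      refine Set.mem_iUnion.mpr ⟨k, Set.mem_iInter₂.mpr fun j hj => ?_⟩
      simp only [Set.mem_setOf_eq, ← hallz j]
      exact (hk j hj).le
  have hnull : Tendsto (fun k => m (E k)ᶜ) atTop (nhds 0) := by
    have h1 : Tendsto (fun k => m (E k)ᶜ) atTop (nhds (m (⋂ k, (E k)ᶜ))) := by
      refine tendsto_measure_iInter_atTop (fun k => (hEmeas k).compl.nullMeasurableSet)
        (fun k k' hkk' => Set.compl_subset_compl.mpr (hEmono hkk')) ⟨0, measure_ne_top m _⟩
    have h2 : m (⋂ k, (E k)ᶜ) = 0 := by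
      rw [← Set.compl_iUnion]
      have := ae_iff.mp hcover
      simpa [Set.compl_def] using this
    rwa [h2] at h1
  refine ENNReal.le_of_forall_pos_le_add fun ε hε hLfin => ?_
  obtain ⟨M, hM⟩ := s.exists_forall_norm_le
  have hM0 : 0 ≤ M := (norm_nonneg (s 0)).trans (hM 0)
  set η : ℝ≥0∞ := (ε : ℝ≥0∞) / (ENNReal.ofReal M + 1) with hηdef
  have hηpos : 0 < η := ENNReal.div_pos (by exact_mod_cast hε.ne') (by simp [ENNReal.ofReal_ne_top])
  obtain ⟨δ, hδpos, hδ⟩ := hN η hηpos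
  obtain ⟨k, hk⟩ := eventually_atTop.mp (hnull.eventually_lt_const hδpos)
  have hmE : m (E k)ᶜ < δ := hk k le_rfl
  have hχ : N.α (((E k)ᶜ).indicator fun _ => (1:ℂ)) < η := hδ _ (hEmeas k).compl hmE
  -- split s
  set s1 : SimpleFunc 𝕋 ℂ := SimpleFunc.piecewise (E k) (hEmeas k) s 0 with hs1def
  set s2 : SimpleFunc 𝕋 ℂ := SimpleFunc.piecewise (E k)ᶜ (hEmeas k).compl s 0 with hs2def
  have hs1z : ∀ z, s1 z = if z ∈ E k then s z else 0 := by
    intro z; rw [hs1def, SimpleFunc.coe_piecewise]; simp [Set.piecewise]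
  have hs2z : ∀ z, s2 z = if z ∈ (E k)ᶜ then s z else 0 := by
    intro z; rw [hs2def, SimpleFunc.coe_piecewise]; simp [Set.piecewise]
  have hsplit : ⇑s = ⇑s1 + ⇑s2 := by
    funext z
    by_cases hz : z ∈ E k
    · simp [hs1z, hs2z, hz]
    · simp [hs1z, hs2z, hz]
  -- bound on s2
  have hαs2 : N.α ⇑s2 ≤ ENNReal.ofReal M * N.α (((E k)ᶜ).indicator fun _ => (1:ℂ)) := by
    have hmono : N.α ⇑s2 ≤ N.α ((M:ℂ) • ((E k)ᶜ).indicator fun _ => (1:ℂ)) := by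
      refine N.alpha_mono s2.aemeasurable ?_ (.of_forall fun z => ?_)
      · exact (measurable_const.indicator (hEmeas k).compl).aemeasurable.const_smul _
      · by_cases hz : z ∈ (E k)ᶜ
        · simp only [hs2z, hz, if_pos, Pi.smul_apply, Set.indicator_of_mem hz, smul_eq_mul, mul_one]
          simpa [abs_of_nonneg hM0] using hM z
        · simp [hs2z, hz, Set.indicator_of_notMem hz]
    rw [N.smul_eq] at hmono
    refine hmono.trans (le_of_eq ?_)
    congr 1
    simp [← enorm_eq_nnnorm, ← ofReal_norm, abs_of_nonneg hM0]
  have hαs2' : N.α ⇑s2 ≤ ε := by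
    refine hαs2.trans ?_
    calc ENNReal.ofReal M * N.α (((E k)ᶜ).indicator fun _ => (1:ℂ))
        ≤ (ENNReal.ofReal M + 1) * η := by
          exact mul_le_mul' (le_add_of_nonneg_right zero_le_one) hχ.le
      _ ≤ ε := by
          rw [hηdef]
          exact ENNReal.mul_div_le
  -- bound on s1
  have hαs1 : a * N.α ⇑s1 ≤ L := by
    set sθ : SimpleFunc 𝕋 ℂ := (θ:ℂ) • s1 with hsθdef
    have hsθz : ∀ z, sθ z = (θ:ℂ) * s1 z := fun z => rfl
    have hdom : ∀ j, k ≤ j → ∀ᵐ z ∂m, ‖sθ z‖ ≤ ‖g j z‖ := by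
      intro j hj
      filter_upwards [hg'ae j] with z hzj
      rw [hzj, hsθz]
      by_cases hz : z ∈ E k
      · have hzE : θ * ‖s z‖ ≤ ‖g' j z‖ := by
          have := Set.mem_iInter₂.mp hz j hj
          exact this
        simp only [hs1z, hz, if_pos, norm_mul, Complex.norm_real, Real.norm_eq_abs,
          abs_of_nonneg hθpos.le]
        exact hzE
      · simp [hs1z, hz, norm_nonneg]
    have hle : ∀ j, k ≤ j → N.α ⇑sθ ≤ N.α (g j) := fun j hj =>
      N.alpha_simple_le (hg j) (hdom j hj)
    have hliminf : N.α ⇑sθ ≤ L := by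
      refine le_liminf_of_le (by isBoundedDefault) ?_
      exact eventually_atTop.mpr ⟨k, hle⟩
    have heq : N.α ⇑sθ = a * N.α ⇑s1 := by
      have hcoe : ⇑sθ = (θ:ℂ) • ⇑s1 := SimpleFunc.coe_smul _ _
      rw [hcoe, N.smul_eq, haθ]
      congr 1
      simp [← enorm_eq_nnnorm, ← ofReal_norm, abs_of_nonneg hθpos.le]
    rwa [heq] at hliminf
  -- combine
  have hαsplit : N.α ⇑s ≤ N.α ⇑s1 + N.α ⇑s2 := by
    rw [hsplit]; exact N.add_le _ _
  calc a * N.α ⇑s ≤ a * (N.α ⇑s1 + N.α ⇑s2) := mul_le_mul_right hαsplit a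
    _ = a * N.α ⇑s1 + a * N.α ⇑s2 := mul_add _ _ _
    _ ≤ L + 1 * N.α ⇑s2 := add_le_add hαs1 (mul_le_mul' ha.le le_rfl)
    _ = L + N.α ⇑s2 := by rw [one_mul]
    _ ≤ L + ε := add_le_add_right hαs2' L

end RotNorm


/-- If α is a continuous rotationally symmetric norm, then `(ℒ^α(𝕋), α)`
is complete (a Banach space), and `L^∞(𝕋) ⊆ L^α(𝕋) ⊆ ℒ^α(𝕋) ⊆ L^1(𝕋)`. -/
theorem scriptL_complete_and_inclusions
    (N : RotNorm) (hN : IsContNorm N.α) :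
    (∀ F : ℕ → 𝕋 → ℂ, (∀ n, MemScriptL N.α (F n)) →
      (∀ ε : ℝ≥0∞, 0 < ε → ∃ K : ℕ, ∀ j k : ℕ, K ≤ j → K ≤ k → N.α (F j - F k) < ε) →
      ∃ f : 𝕋 → ℂ, MemScriptL N.α f ∧
        Tendsto (fun n => N.α (F n - f)) atTop (nhds 0)) ∧
    (∀ f : 𝕋 → ℂ, MemLp f ⊤ m → MemL N.α f) ∧
    (∀ f : 𝕋 → ℂ, MemL N.α f → MemScriptL N.α f) ∧
    (∀ f : 𝕋 → ℂ, MemScriptL N.α f → Integrable f m) := by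
  refine ⟨?_, ?_, fun f hf => hf.1, ?_⟩
  · intro F hmem hcauchy
    have hpow : ∀ k : ℕ, (0:ℝ≥0∞) < 2⁻¹ ^ k := fun k => ENNReal.pow_pos (by simp) k
    choose K hK using fun k : ℕ => hcauchy (2⁻¹ ^ k) (hpow k)
    set nn : ℕ → ℕ := fun k => (Finset.range (k+1)).sup K + k with hnndef
    have hnnK : ∀ j k, j ≤ k → K j ≤ nn k := fun j k hjk =>
      le_add_of_le_of_nonneg (Finset.le_sup (Finset.mem_range.mpr (Nat.lt_succ_of_le hjk))) (Nat.zero_le k)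
    have hnnk : ∀ k, k ≤ nn k := fun k => le_add_of_nonneg_of_le (Nat.zero_le _) le_rfl
    set G : ℕ → 𝕋 → ℂ := fun k => F (nn k) with hGdef
    have hGm : ∀ k, AEMeasurable (G k) m := fun k => (hmem _).1
    have hdiff : ∀ k, N.α (G (k+1) - G k) < 2⁻¹ ^ k := fun k =>
      hK k _ _ (hnnK k (k+1) (Nat.le_succ k)) (hnnK k k le_rfl)
    have hdiffL1 : ∀ k, ∫⁻ z, (‖G (k+1) z - G k z‖₊ : ℝ≥0∞) ∂m ≤ 4 * 2⁻¹ ^ k := by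
      intro k
      have h1 := N.lintegral_le hN ((hGm (k+1)).sub (hGm k))
      exact h1.trans (mul_le_mul_right (hdiff k).le 4)
    have htsumm : AEMeasurable (fun z => ∑' k, (‖G (k+1) z - G k z‖₊ : ℝ≥0∞)) m :=
      AEMeasurable.ennreal_tsum fun k => ((hGm (k+1)).sub (hGm k)).enorm
    have hsum : ∫⁻ z, (∑' k, (‖G (k+1) z - G k z‖₊ : ℝ≥0∞)) ∂m < ⊤ := by
      rw [lintegral_tsum (f := fun k z => (‖G (k+1) z - G k z‖₊ : ℝ≥0∞)) fun k => ((hGm (k+1)).sub (hGm k)).enorm]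
      calc ∑' k, ∫⁻ z, (‖G (k+1) z - G k z‖₊ : ℝ≥0∞) ∂m
          ≤ ∑' k : ℕ, 4 * 2⁻¹ ^ k := ENNReal.tsum_le_tsum hdiffL1
        _ = 4 * ∑' k : ℕ, 2⁻¹ ^ k := ENNReal.tsum_mul_left
        _ = 4 * (1 - 2⁻¹)⁻¹ := by rw [ENNReal.tsum_geometric]
        _ = 4 * 2 := by rw [ENNReal.one_sub_inv_two, inv_inv]
        _ < ⊤ := by simp [lt_top_iff_ne_top, ENNReal.mul_ne_top]
    have hae : ∀ᵐ z ∂m, (∑' k, (‖G (k+1) z - G k z‖₊ : ℝ≥0∞)) < ⊤ :=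
      ae_lt_top' htsumm hsum.ne
    set f : 𝕋 → ℂ := fun z => limUnder atTop (fun k => G k z) with hfdef
    have hconv : ∀ᵐ z ∂m, Tendsto (fun k => G k z) atTop (nhds (f z)) := by
      filter_upwards [hae] with z hz
      have hsummable : Summable (fun k => G (k+1) z - G k z) := by
        refine Summable.of_nnnorm ?_
        exact ENNReal.tsum_coe_ne_top_iff_summable.mp hz.ne
      have hten := hsummable.hasSum.tendsto_sum_nat
      have hten2 : Tendsto (fun k => G 0 z + ∑ i ∈ Finset.range k, (G (i+1) z - G i z)) atTop
          (nhds (G 0 z + ∑' i, (G (i+1) z - G i z))) := tendsto_const_nhds.add hten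
      have heq : (fun k => G 0 z + ∑ i ∈ Finset.range k, (G (i+1) z - G i z))
          = fun k => G k z := by
        funext k
        rw [Finset.sum_range_sub (fun i => G i z)]
        ring
      rw [heq] at hten2
      have hlim : f z = G 0 z + ∑' i, (G (i+1) z - G i z) := hten2.limUnder_eq
      rw [hlim]
      exact hten2
    have hfm : AEMeasurable f m := aemeasurable_of_tendsto_metrizable_ae atTop hGm hconv
    have hbound : ∀ ε : ℝ≥0∞, 0 < ε → ∃ Kj : ℕ, ∀ j, Kj ≤ j → N.α (F j - f) ≤ ε := by
      intro ε hε
      obtain ⟨Kj, hKj⟩ := hcauchy ε hε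
      refine ⟨Kj, fun j hj => ?_⟩
      have hconvj : ∀ᵐ z ∂m, Tendsto (fun k => (F j - G k) z) atTop (nhds ((F j - f) z)) := by
        filter_upwards [hconv] with z hz
        simpa using tendsto_const_nhds.sub hz
      have hfat : N.α (F j - f) ≤ liminf (fun k => N.α (F j - G k)) atTop :=
        N.fatou hN (fun k => ((hmem j).1.sub (hGm k))) ((hmem j).1.sub hfm) hconvj
      refine hfat.trans ?_
      have hev : ∀ᶠ k in atTop, N.α (F j - G k) ≤ ε := by
        filter_upwards [eventually_ge_atTop Kj] with k hk
        exact (hKj j (nn k) hj (hk.trans (hnnk k))).le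
      calc liminf (fun k => N.α (F j - G k)) atTop
          ≤ liminf (fun _ => ε) atTop := liminf_le_liminf hev
        _ = ε := liminf_const ε
    refine ⟨f, ⟨hfm, ?_⟩, ?_⟩
    · obtain ⟨K1, hK1⟩ := hbound 1 zero_lt_one
      have h1 : N.α (F K1 - f) ≤ 1 := hK1 K1 le_rfl
      have hneg : N.α (f - F K1) = N.α (F K1 - f) := by
        rw [show f - F K1 = -(F K1 - f) by funext z; simp, N.alpha_neg]
      have h2 : N.α f ≤ N.α (f - F K1) + N.α (F K1) := by
        have hfe : f = (f - F K1) + F K1 := by funext z; simp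
        calc N.α f = N.α ((f - F K1) + F K1) := by rw [← hfe]
          _ ≤ _ := N.add_le _ _
      have h3 : N.α f ≤ 1 + N.α (F K1) := by
        rw [hneg] at h2
        exact h2.trans (add_le_add_left h1 _)
      have h4 : (1 : ℝ≥0∞) + N.α (F K1) < ⊤ := by
        rw [lt_top_iff_ne_top]
        exact ENNReal.add_ne_top.mpr ⟨ENNReal.one_ne_top, (hmem K1).2⟩
      exact (h3.trans_lt h4).ne
    · rw [ENNReal.tendsto_atTop_zero]
      intro ε hε
      obtain ⟨Kj, hKj⟩ := hbound ε hε
      exact ⟨Kj, fun n hn => hKj n hn⟩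
  · intro f hf
    have hfm : AEMeasurable f m := hf.aestronglyMeasurable.aemeasurable
    have hfin : eLpNormEssSup f m ≠ ⊤ := by
      have h2 := hf.2
      rw [eLpNorm_exponent_top] at h2
      exact h2.ne
    have hbdd : ∀ᵐ z ∂m, ‖f z‖ ≤ (eLpNormEssSup f m).toReal := by
      filter_upwards [ae_le_eLpNormEssSup (f := f) (μ := m)] with z hz
      have h3 : (‖f z‖₊ : ℝ≥0∞) ≤ eLpNormEssSup f m := by exact_mod_cast hz
      have h4 := ENNReal.toReal_mono hfin h3
      simpa using h4
    have hα : N.α f ≤ ENNReal.ofReal (eLpNormEssSup f m).toReal :=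
      N.alpha_le_of_bdd hfm ENNReal.toReal_nonneg hbdd
    refine ⟨⟨hfm, (hα.trans_lt ENNReal.ofReal_lt_top).ne⟩, fun ε hε => ⟨f, hf, ?_⟩⟩
    have h0 : f - f = 0 := sub_self f
    rw [h0, N.alpha_zero]
    exact hε
  · intro f hf
    have h4 := N.lintegral_le hN hf.1
    have hlt : (4:ℝ≥0∞) * N.α f < ⊤ :=
      ENNReal.mul_lt_top (by norm_num) (lt_top_iff_ne_top.mpr hf.2)
    exact ⟨hf.1.aestronglyMeasurable, h4.trans_lt hlt⟩


end
end

section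
/- Suppose α is a continuous rotationally symmetric norm on L^∞(𝕋). Then the dual space of L^α(𝕋) is ℒ^{α′}(𝕋): for every bounded linear functional φ on L^α(𝕋) there exists a (unique a.e.) h ∈ ℒ^{α′}(𝕋) such that φ(f) = ∫_𝕋 f h dm for all f ∈ L^α(𝕋), and ‖φ‖ = α′(h); conversely every h ∈ ℒ^{α′}(𝕋) induces such a functional. -/
open MeasureTheory Filter
open scoped ENNReal Real

noncomputable section

namespace DualProofAux
open scoped NNReal

variable (N : RotNorm)

lemma alpha_zero : N.α 0 = 0 := by
  have := N.smul_eq 0 0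
  simpa using this

lemma alpha_mono {f g : 𝕋 → ℂ} (hf : AEMeasurable f m) (hg : AEMeasurable g m)
    (hle : ∀ᵐ z ∂m, ‖f z‖ ≤ ‖g z‖) : N.α f ≤ N.α g := by
  rw [N.simple_sup f hf, N.simple_sup g hg]
  refine iSup_mono fun s => iSup_le fun hs => ?_
  exact le_iSup (fun _ : (∀ᵐ z ∂m, ‖s z‖ ≤ ‖g z‖) => N.α s)
    (hs.mp (hle.mono fun z h1 h2 => h2.trans h1))

lemma alpha_const (M : ℝ≥0) : N.α (fun _ => ((M : ℝ) : ℂ)) = (M : ℝ≥0∞) := by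
  have : (fun _ : 𝕋 => ((M : ℝ) : ℂ)) = ((M : ℝ) : ℂ) • (1 : 𝕋 → ℂ) := by
    funext z; simp
  rw [this, N.smul_eq, N.one_eq]
  simp

lemma alpha_le_of_bound {f : 𝕋 → ℂ} (hf : AEMeasurable f m) (M : ℝ≥0)
    (hb : ∀ᵐ z ∂m, ‖f z‖ ≤ (M : ℝ)) : N.α f ≤ (M : ℝ≥0∞) := by
  rw [← alpha_const N M]
  refine alpha_mono N hf aemeasurable_const (hb.mono fun z hz => ?_)
  simpa using hz

lemma memL_of_bound {f : 𝕋 → ℂ} (hf : AEMeasurable f m) (M : ℝ)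
    (hb : ∀ᵐ z ∂m, ‖f z‖ ≤ M) : MemL N.α f := by
  have hb' : ∀ᵐ z ∂m, ‖f z‖ ≤ (M.toNNReal : ℝ) := hb.mono fun z hz => hz.trans (Real.le_coe_toNNReal M)
  refine ⟨⟨hf, ?_⟩, fun ε hε => ⟨f, memLp_top_of_bound hf.aestronglyMeasurable M hb, ?_⟩⟩
  · exact ((alpha_le_of_bound N hf _ hb').trans_lt ENNReal.coe_lt_top).ne
  · have : f - f = 0 := by funext z; simp
    rw [this, alpha_zero N]; exact hε

/-- complex "sign" function -/
def csgn (w : ℂ) : ℂ := (‖w‖ : ℂ) * w⁻¹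

lemma measurable_csgn : Measurable csgn :=
  (Complex.measurable_ofReal.comp measurable_norm).mul (measurable_inv)

lemma norm_csgn_le (w : ℂ) : ‖csgn w‖ ≤ 1 := by
  rcases eq_or_ne w 0 with rfl | hw
  · simp [csgn]
  · simp only [csgn, norm_mul, Complex.norm_real, norm_norm, norm_inv]
    rw [mul_inv_cancel₀ (norm_ne_zero_iff.2 hw)]

lemma mul_csgn (w : ℂ) : w * csgn w = (‖w‖ : ℂ) := by
  rcases eq_or_ne w 0 with rfl | hw
  · simp [csgn]
  · rw [csgn]
    field_simp



lemma le_dual_of_le_one (h : 𝕋 → ℂ) {g : 𝕋 → ℂ} (hg : MemLp g ⊤ m) (hα : N.α g ≤ 1) :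
    ∫⁻ z, (‖h z * g z‖₊ : ℝ≥0∞) ∂m ≤ dualOf N.α h := by
  rw [dualOf]
  exact le_iSup_of_le g (by rw [iSup_pos hg, iSup_pos hα])

lemma nnnorm_real_coe (t : ℝ≥0) : ‖(((t:ℝ)):ℂ)‖₊ = t := by
  ext
  simp [Real.norm_eq_abs, abs_of_nonneg t.coe_nonneg]

lemma lintegral_le_dual_mul_of_bound {h g : 𝕋 → ℂ} (hh : AEMeasurable h m)
    (hg : AEMeasurable g m) (hD : dualOf N.α h ≠ ∞) (M : ℝ≥0)
    (hb : ∀ᵐ z ∂m, ‖g z‖ ≤ (M : ℝ)) :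
    ∫⁻ z, (‖g z * h z‖₊ : ℝ≥0∞) ∂m ≤ dualOf N.α h * N.α g := by
  set D := dualOf N.α h with hDdef
  set I := ∫⁻ z, (‖g z * h z‖₊ : ℝ≥0∞) ∂m with hIdef
  have key : ∀ t : ℝ≥0, (t : ℝ≥0∞) * N.α g ≤ 1 → (t : ℝ≥0∞) * I ≤ D := by
    intro t ht
    set g' : 𝕋 → ℂ := fun z => (((t:ℝ)):ℂ) * g z with hg'
    have hsm : g' = (((t:ℝ)):ℂ) • g := rfl
    have hgt : MemLp g' ⊤ m := by
      refine memLp_top_of_bound (aemeasurable_const.mul hg).aestronglyMeasurable ((t:ℝ) * M)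
        (hb.mono fun z hz => ?_)
      rw [hg']
      calc ‖(((t:ℝ)):ℂ) * g z‖ = (t:ℝ) * ‖g z‖ := by
            rw [norm_mul, Complex.norm_real, Real.norm_eq_abs, abs_of_nonneg t.coe_nonneg]
        _ ≤ (t:ℝ) * M := mul_le_mul_of_nonneg_left hz t.coe_nonneg
    have hα' : N.α g' ≤ 1 := by
      rw [hsm, N.smul_eq, nnnorm_real_coe]
      exact ht
    have h1 := le_dual_of_le_one N h hgt hα'
    have h2 : ∫⁻ z, (‖h z * g' z‖₊ : ℝ≥0∞) ∂m = (t : ℝ≥0∞) * I := by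
      rw [hIdef, ← lintegral_const_mul' _ _ ENNReal.coe_ne_top]
      refine lintegral_congr fun z => ?_
      rw [hg']
      rw [show h z * ((((t:ℝ)):ℂ) * g z) = (((t:ℝ)):ℂ) * (g z * h z) by ring]
      rw [nnnorm_mul, ENNReal.coe_mul, nnnorm_real_coe]
    rw [← h2]
    exact h1
  rcases eq_or_ne (N.α g) 0 with h0 | hpos
  · rw [h0, mul_zero]
    by_contra hne
    have hIne : I ≠ 0 := fun hI0 => hne (le_of_eq hI0)
    rcases eq_or_ne I ∞ with hItop | hIfin
    · have := key 1 (by rw [h0, mul_zero]; exact zero_le_one)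
      rw [ENNReal.coe_one, one_mul, hItop, top_le_iff] at this
      exact hD this
    · lift I to ℝ≥0 using hIfin with i hi
      have hi0 : i ≠ 0 := by simpa using hIne
      set t : ℝ≥0 := D.toNNReal * i⁻¹ + 1 with htdef
      have := key t (by rw [h0, mul_zero]; exact zero_le_one)
      rw [← ENNReal.coe_mul, ← ENNReal.coe_toNNReal hD, ENNReal.coe_le_coe] at this
      have hti : t * i = D.toNNReal + i := by
        rw [htdef, add_mul, one_mul, mul_assoc, inv_mul_cancel₀ hi0, mul_one]
      rw [hti] at this
      have : i ≤ 0 := by simpa using this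
      exact hi0 (le_antisymm this zero_le)
  · have hfin : N.α g ≠ ∞ := ((alpha_le_of_bound N hg M hb).trans_lt ENNReal.coe_lt_top).ne
    lift N.α g to ℝ≥0 using hfin with a ha
    have ha0 : a ≠ 0 := by simpa using hpos
    have hkey := key a⁻¹ (by
      rw [← ENNReal.coe_mul, inv_mul_cancel₀ ha0, ENNReal.coe_one])
    calc I = ((a : ℝ≥0∞) * (a⁻¹ : ℝ≥0)) * I := by
          rw [← ENNReal.coe_mul, mul_inv_cancel₀ ha0, ENNReal.coe_one, one_mul]
      _ = (a : ℝ≥0∞) * (((a⁻¹ : ℝ≥0) : ℝ≥0∞) * I) := by rw [mul_assoc]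
      _ ≤ (a : ℝ≥0∞) * D := mul_le_mul_right hkey _
      _ = D * a := mul_comm _ _

lemma lintegral_mul_le_dual {h f : 𝕋 → ℂ} (hh : AEMeasurable h m) (hf : AEMeasurable f m)
    (hD : dualOf N.α h ≠ ∞) :
    ∫⁻ z, (‖f z * h z‖₊ : ℝ≥0∞) ∂m ≤ dualOf N.α h * N.α f := by
  set f' := hf.mk f with hf'def
  have hf' : Measurable f' := hf.measurable_mk
  have hfe : f =ᵐ[m] f' := hf.ae_eq_mk
  have hαe : N.α f = N.α f' := N.ae_eq _ _ hfe
  have hIe : ∫⁻ z, (‖f z * h z‖₊:ℝ≥0∞) ∂m = ∫⁻ z, (‖f' z * h z‖₊:ℝ≥0∞) ∂m :=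
    lintegral_congr_ae (hfe.mono fun z hz => by dsimp only; rw [hz])
  rw [hαe, hIe]
  set F : ℕ → 𝕋 → ℂ := fun n z => if ‖f' z‖ ≤ (n:ℝ) then f' z else 0 with hF
  have hFmeas : ∀ n, Measurable (F n) := fun n =>
    Measurable.ite (measurableSet_le hf'.norm measurable_const) hf' measurable_const
  have hFapp : ∀ n z, F n z = if ‖f' z‖ ≤ (n:ℝ) then f' z else 0 := fun n z => rfl
  have hFle : ∀ n z, ‖F n z‖ ≤ ‖f' z‖ := by
    intro n z; rw [hFapp]
    split_ifs with hc
    · exact le_rfl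
    · simp
  have hFbd : ∀ n z, ‖F n z‖ ≤ ((n : ℝ≥0) : ℝ) := by
    intro n z; rw [hFapp]
    split_ifs with hc
    · exact_mod_cast hc
    · simp
  have hmono : ∀ z, Monotone fun n => (‖F n z * h z‖₊ : ℝ≥0∞) := by
    intro z i j hij
    dsimp only
    rw [hFapp, hFapp]
    by_cases hc : ‖f' z‖ ≤ (i:ℝ)
    · have hcj : ‖f' z‖ ≤ (j:ℝ) := hc.trans (Nat.cast_le.2 hij)
      rw [if_pos hc, if_pos hcj]
    · rw [if_neg hc]
      simp
  have hsup : ∀ z, (⨆ n, (‖F n z * h z‖₊ : ℝ≥0∞)) = (‖f' z * h z‖₊:ℝ≥0∞) := by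
    intro z
    refine le_antisymm (iSup_le fun n => ?_) ?_
    · rw [hFapp]
      split_ifs with hc
      · exact le_rfl
      · simp
    · have hc : ‖f' z‖ ≤ ((⌈‖f' z‖⌉₊ : ℕ):ℝ) := Nat.le_ceil _
      refine le_iSup_of_le ⌈‖f' z‖⌉₊ ?_
      rw [hFapp, if_pos hc]
  calc ∫⁻ z, (‖f' z * h z‖₊:ℝ≥0∞) ∂m
      = ∫⁻ z, ⨆ n, (‖F n z * h z‖₊:ℝ≥0∞) ∂m := lintegral_congr fun z => (hsup z).symm
    _ = ⨆ n, ∫⁻ z, (‖F n z * h z‖₊:ℝ≥0∞) ∂m :=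
        lintegral_iSup' (fun n => ((hFmeas n).aemeasurable.mul hh).enorm)
          (ae_of_all _ hmono)
    _ ≤ ⨆ n, dualOf N.α h * N.α (F n) := by
        refine iSup_mono fun n => ?_
        exact lintegral_le_dual_mul_of_bound N hh (hFmeas n).aemeasurable hD (n : ℝ≥0)
          (ae_of_all _ (hFbd n))
    _ ≤ dualOf N.α h * N.α f' := by
        refine iSup_le fun n => mul_le_mul_right ?_ _
        exact alpha_mono N (hFmeas n).aemeasurable hf'.aemeasurable (ae_of_all _ (hFle n))

lemma converse_part {h : 𝕋 → ℂ} (hh : AEMeasurable h m) (hD : dualOf N.α h ≠ ∞)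
    {f : 𝕋 → ℂ} (hf : MemL N.α f) :
    Integrable (fun z => f z * h z) m ∧
      (‖∫ z, f z * h z ∂m‖₊ : ℝ≥0∞) ≤ dualOf N.α h * N.α f := by
  obtain ⟨⟨hfm, hfα⟩, -⟩ := hf
  have hkey := lintegral_mul_le_dual N hh hfm hD
  have hfin : ∫⁻ z, (‖f z * h z‖₊:ℝ≥0∞) ∂m < ∞ :=
    hkey.trans_lt (ENNReal.mul_lt_top (lt_top_iff_ne_top.2 hD) (lt_top_iff_ne_top.2 hfα))
  refine ⟨⟨(hfm.mul hh).aestronglyMeasurable, ?_⟩, ?_⟩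
  · exact hfin
  · exact (enorm_integral_le_lintegral_enorm _).trans hkey



lemma exists_ae_bound {g : 𝕋 → ℂ} (hg : MemLp g ⊤ m) :
    ∃ M : ℝ, 0 ≤ M ∧ ∀ᵐ z ∂m, ‖g z‖ ≤ M := by
  refine ⟨(eLpNorm g ⊤ m).toReal, ENNReal.toReal_nonneg, ?_⟩
  have h1 : ∀ᵐ x ∂m, (‖g x‖₊ : ℝ≥0∞) ≤ eLpNorm g ⊤ m := by
    rw [eLpNorm_exponent_top]
    exact ae_le_eLpNormEssSup
  filter_upwards [h1] with x hx
  calc ‖g x‖ = ((‖g x‖₊ : ℝ≥0∞)).toReal := by simp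
    _ ≤ (eLpNorm g ⊤ m).toReal := ENNReal.toReal_mono hg.2.ne hx

lemma memL_of_memtop {g : 𝕋 → ℂ} (hg : MemLp g ⊤ m) : MemL N.α g := by
  obtain ⟨M, _, hb⟩ := exists_ae_bound hg
  exact memL_of_bound N hg.aestronglyMeasurable.aemeasurable M hb

section Construct

variable (hN : IsContNorm N.α) {φ : (𝕋 → ℂ) → ℂ}
  (hadd : ∀ f g : 𝕋 → ℂ, MemL N.α f → MemL N.α g → φ (f + g) = φ f + φ g)
  (hsmul : ∀ (c : ℂ) (f : 𝕋 → ℂ), MemL N.α f → φ (c • f) = c * φ f)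
  (hae : ∀ f g : 𝕋 → ℂ, MemL N.α f → MemL N.α g → f =ᵐ[m] g → φ f = φ g)
  {C : ℝ≥0∞} (hC : C ≠ ∞)
  (hbound : ∀ f : 𝕋 → ℂ, MemL N.α f → (‖φ f‖₊ : ℝ≥0∞) ≤ C * N.α f)

lemma memL_indicator {E : Set 𝕋} (hE : MeasurableSet E) :
    MemL N.α (E.indicator fun _ => (1:ℂ)) := by
  refine memL_of_bound N ((measurable_one.indicator hE).aemeasurable) 1 (ae_of_all _ fun z => ?_)
  by_cases hz : z ∈ E <;> simp [Set.indicator_apply, hz]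

lemma memL_zero : MemL N.α 0 :=
  memL_of_bound N aemeasurable_const 0 (ae_of_all _ fun z => by simp)

include hsmul in
lemma phi_zero : φ 0 = 0 := by
  have := hsmul 0 0 (memL_zero N)
  simpa using this

include hadd in
lemma phi_union {A B : Set 𝕋} (hA : MeasurableSet A) (hB : MeasurableSet B)
    (hAB : Disjoint A B) :
    φ ((A ∪ B).indicator fun _ => (1:ℂ)) =
      φ (A.indicator fun _ => (1:ℂ)) + φ (B.indicator fun _ => (1:ℂ)) := by
  rw [Set.indicator_union_of_disjoint hAB]
  exact hadd _ _ (memL_indicator N hA) (memL_indicator N hB)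

include hN hbound hC in
lemma phi_small : ∀ ε : ℝ, 0 < ε → ∃ δ : ℝ≥0∞, 0 < δ ∧ ∀ E : Set 𝕋, MeasurableSet E →
    m E < δ → ‖φ (E.indicator fun _ => (1:ℂ))‖ ≤ ε := by
  intro ε hε
  obtain ⟨δ, hδpos, hδ⟩ := hN (ENNReal.ofReal ε / (C + 1))
    (ENNReal.div_pos (ENNReal.ofReal_pos.2 hε).ne' (ENNReal.add_ne_top.2 ⟨hC, ENNReal.one_ne_top⟩))
  refine ⟨δ, hδpos, fun E hE hlt => ?_⟩
  have h1 : (‖φ (E.indicator fun _ => (1:ℂ))‖₊ : ℝ≥0∞) ≤ C * (ENNReal.ofReal ε / (C + 1)) :=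
    (hbound _ (memL_indicator N hE)).trans (mul_le_mul_right (hδ E hE hlt).le _)
  have h2 : C * (ENNReal.ofReal ε / (C + 1)) ≤ ENNReal.ofReal ε := by
    calc C * (ENNReal.ofReal ε / (C + 1)) ≤ (C + 1) * (ENNReal.ofReal ε / (C + 1)) :=
          mul_le_mul_left (le_self_add) _
      _ = ENNReal.ofReal ε := ENNReal.mul_div_cancel (by simp) (ENNReal.add_ne_top.2 ⟨hC, ENNReal.one_ne_top⟩)
  rw [← enorm_eq_nnnorm, ← ofReal_norm] at h1
  exact (ENNReal.ofReal_le_ofReal_iff hε.le).1 (h1.trans h2)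

include hadd hsmul hae hC hbound hN in
lemma exists_density :
    ∃ h : 𝕋 → ℂ, Integrable h m ∧ ∀ E : Set 𝕋, MeasurableSet E →
      φ (E.indicator fun _ => (1:ℂ)) = ∫ z in E, h z ∂m := by
  classical
  -- countable additivity
  have hsum : ∀ g : ℕ → Set 𝕋, (∀ i, MeasurableSet (g i)) → Pairwise (Function.onFun Disjoint g) →
      HasSum (fun i => φ ((g i).indicator fun _ => (1:ℂ)))
        (φ ((⋃ i, g i).indicator fun _ => (1:ℂ))) := by
    intro g hmeas hdisj
    have hU : MeasurableSet (⋃ i, g i) := MeasurableSet.iUnion hmeas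
    have hbiU : ∀ s : Finset ℕ, MeasurableSet (⋃ i ∈ s, g i) := fun s =>
      s.measurableSet_biUnion fun i _ => hmeas i
    have hpart : ∀ s : Finset ℕ, ∑ i ∈ s, φ ((g i).indicator fun _ => (1:ℂ))
        = φ ((⋃ i ∈ s, g i).indicator fun _ => (1:ℂ)) := by
      intro s
      induction s using Finset.induction_on with
      | empty =>
        rw [Finset.sum_empty]
        have : (⋃ i ∈ (∅ : Finset ℕ), g i) = (∅ : Set 𝕋) := by simp
        rw [this, Set.indicator_empty]
        exact (phi_zero N hsmul).symm
      | @insert a s ha ih =>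
        have hdisj2 : Disjoint (g a) (⋃ i ∈ s, g i) := by
          rw [Set.disjoint_left]
          intro x hxa hxU
          rw [Set.mem_iUnion₂] at hxU
          obtain ⟨i, his, hxi⟩ := hxU
          have hne : a ≠ i := fun hai => ha (hai ▸ his)
          exact Set.disjoint_left.1 (hdisj hne) hxa hxi
        rw [Finset.sum_insert ha, ih, Finset.set_biUnion_insert,
          phi_union N hadd (hmeas a) (hbiU s) hdisj2]
    have hdiff : ∀ s : Finset ℕ,
        φ (((⋃ i, g i) \ ⋃ i ∈ s, g i).indicator fun _ => (1:ℂ))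
          = φ ((⋃ i, g i).indicator fun _ => (1:ℂ))
            - ∑ i ∈ s, φ ((g i).indicator fun _ => (1:ℂ)) := by
      intro s
      have hsub : (⋃ i ∈ s, g i) ⊆ ⋃ i, g i := Set.iUnion₂_subset fun i _ => Set.subset_iUnion g i
      have h1 := phi_union N hadd (hbiU s) (hU.diff (hbiU s)) Set.disjoint_sdiff_right
      rw [Set.union_diff_cancel hsub] at h1
      rw [hpart s, h1]
      ring
    have htail : Filter.Tendsto (fun s : Finset ℕ => ∑' i : {i // i ∉ s}, m (g ↑i))
        Filter.atTop (nhds 0) := by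
      refine ENNReal.tendsto_tsum_compl_atTop_zero (f := fun i => m (g i)) ?_
      rw [← measure_iUnion hdisj hmeas]
      exact measure_ne_top m _
    show Filter.Tendsto _ Filter.atTop (nhds _)
    rw [Metric.tendsto_nhds]
    intro ε hε
    obtain ⟨δ, hδpos, hδ⟩ := phi_small N hN hC hbound (ε/2) (half_pos hε)
    have hev : ∀ᶠ s : Finset ℕ in Filter.atTop, (∑' i : {i // i ∉ s}, m (g ↑i)) < δ :=
      htail.eventually (gt_mem_nhds hδpos)
    filter_upwards [hev] with s hs
    have hmsub : m ((⋃ i, g i) \ ⋃ i ∈ s, g i) < δ := by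
      refine lt_of_le_of_lt ?_ hs
      have hsubset : (⋃ i, g i) \ (⋃ i ∈ s, g i) ⊆ ⋃ i : {i // i ∉ s}, g ↑i := by
        rintro x ⟨hxU, hxs⟩
        rw [Set.mem_iUnion] at hxU
        obtain ⟨i, hxi⟩ := hxU
        have his : i ∉ s := fun hin => hxs (Set.mem_biUnion hin hxi)
        exact Set.mem_iUnion.2 ⟨⟨i, his⟩, hxi⟩
      exact (measure_mono hsubset).trans (measure_iUnion_le _)
    have hnorm := hδ _ (hU.diff (hbiU s)) hmsub
    rw [hdiff s] at hnorm
    rw [dist_eq_norm]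
    calc ‖(∑ i ∈ s, φ ((g i).indicator fun _ => (1:ℂ)))
          - φ ((⋃ i, g i).indicator fun _ => (1:ℂ))‖
        = ‖φ ((⋃ i, g i).indicator fun _ => (1:ℂ))
          - ∑ i ∈ s, φ ((g i).indicator fun _ => (1:ℂ))‖ := by rw [norm_sub_rev]
      _ ≤ ε/2 := hnorm
      _ < ε := half_lt_self hε
  -- the complex measure
  set μ : ComplexMeasure 𝕋 :=
    { measureOf' := fun E => if MeasurableSet E then φ (E.indicator fun _ => (1:ℂ)) else 0
      empty' := by
        show (if MeasurableSet (∅ : Set 𝕋) then φ ((∅ : Set 𝕋).indicator fun _ => (1:ℂ)) else 0) = 0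
        rw [if_pos MeasurableSet.empty, Set.indicator_empty]
        exact phi_zero N hsmul
      not_measurable' := fun E hE => if_neg hE
      m_iUnion' := by
        intro g hmeas hdisj
        have h1 : (fun i => if MeasurableSet (g i) then φ ((g i).indicator fun _ => (1:ℂ)) else 0)
            = fun i => φ ((g i).indicator fun _ => (1:ℂ)) := funext fun i => if_pos (hmeas i)
        rw [h1]
        show HasSum _ (if MeasurableSet (⋃ i, g i) then φ ((⋃ i, g i).indicator fun _ => (1:ℂ)) else 0)
        rw [if_pos (MeasurableSet.iUnion hmeas)]
        exact hsum g hmeas hdisj } with hμdef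
  have hμapp : ∀ E : Set 𝕋, MeasurableSet E → μ E = φ (E.indicator fun _ => (1:ℂ)) := by
    intro E hE
    show (if MeasurableSet E then φ (E.indicator fun _ => (1:ℂ)) else 0) = _
    exact if_pos hE
  have hnull : ∀ E : Set 𝕋, MeasurableSet E → m E = 0 → μ E = 0 := by
    intro E hE h0
    rw [hμapp E hE]
    have hEae : (E.indicator fun _ => (1:ℂ)) =ᵐ[m] 0 := by
      have : ∀ᵐ z ∂m, z ∉ E := measure_eq_zero_iff_ae_notMem.1 h0
      filter_upwards [this] with z hz
      simp [Set.indicator_apply, hz]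
    rw [hae _ 0 (memL_indicator N hE) (memL_zero N) hEae]
    exact phi_zero N hsmul
  have hre_ac : ComplexMeasure.re μ ≪ᵥ m.toENNRealVectorMeasure := by
    refine MeasureTheory.VectorMeasure.AbsolutelyContinuous.mk fun E hE h0 => ?_
    rw [MeasureTheory.Measure.toENNRealVectorMeasure_apply_measurable hE] at h0
    show (μ E).re = 0
    rw [hnull E hE h0]
    simp
  have him_ac : ComplexMeasure.im μ ≪ᵥ m.toENNRealVectorMeasure := by
    refine MeasureTheory.VectorMeasure.AbsolutelyContinuous.mk fun E hE h0 => ?_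
    rw [MeasureTheory.Measure.toENNRealVectorMeasure_apply_measurable hE] at h0
    show (μ E).im = 0
    rw [hnull E hE h0]
    simp
  have hre : m.withDensityᵥ ((ComplexMeasure.re μ).rnDeriv m) = ComplexMeasure.re μ :=
    SignedMeasure.withDensityᵥ_rnDeriv_eq _ _ hre_ac
  have him : m.withDensityᵥ ((ComplexMeasure.im μ).rnDeriv m) = ComplexMeasure.im μ :=
    SignedMeasure.withDensityᵥ_rnDeriv_eq _ _ him_ac
  refine ⟨μ.rnDeriv m, μ.integrable_rnDeriv m, fun E hE => ?_⟩
  rw [← hμapp E hE]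
  have hint := μ.integrable_rnDeriv m
  apply Complex.ext
  · have h1 : (ComplexMeasure.re μ) E = ∫ z in E, (ComplexMeasure.re μ).rnDeriv m z ∂m := by
      conv_lhs => rw [← hre]
      exact MeasureTheory.withDensityᵥ_apply (SignedMeasure.integrable_rnDeriv _ _) hE
    rw [show (μ E).re = (ComplexMeasure.re μ) E from rfl, h1]
    rw [← RCLike.re_eq_complex_re, ← integral_re hint.integrableOn, RCLike.re_eq_complex_re]
    rfl
  · have h1 : (ComplexMeasure.im μ) E = ∫ z in E, (ComplexMeasure.im μ).rnDeriv m z ∂m := by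
      conv_lhs => rw [← him]
      exact MeasureTheory.withDensityᵥ_apply (SignedMeasure.integrable_rnDeriv _ _) hE
    rw [show (μ E).im = (ComplexMeasure.im μ) E from rfl, h1]
    rw [← RCLike.im_eq_complex_im, ← integral_im hint.integrableOn, RCLike.im_eq_complex_im]
    rfl



lemma memL_simple (s : SimpleFunc 𝕋 ℂ) : MemL N.α ⇑s := by
  obtain ⟨B, hB⟩ := s.exists_forall_norm_le
  exact memL_of_bound N s.measurable.aemeasurable B (ae_of_all _ hB)

include hadd hsmul hae in
lemma rep_simple {h : 𝕋 → ℂ} (hint : Integrable h m)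
    (hEint : ∀ E : Set 𝕋, MeasurableSet E → φ (E.indicator fun _ => (1:ℂ)) = ∫ z in E, h z ∂m) :
    ∀ s : SimpleFunc 𝕋 ℂ, φ ⇑s = ∫ z, s z * h z ∂m := by
  have hmul : ∀ s : SimpleFunc 𝕋 ℂ, Integrable (fun z => s z * h z) m := by
    intro s
    obtain ⟨B, hB⟩ := s.exists_forall_norm_le
    exact Integrable.bdd_mul hint s.aestronglyMeasurable (ae_of_all _ hB)
  intro s
  induction s using SimpleFunc.induction with
  | @const c A hA =>
    have hcoe : ⇑(SimpleFunc.piecewise A hA (SimpleFunc.const 𝕋 c) (SimpleFunc.const 𝕋 0))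
        = A.indicator fun _ => c := by
      funext z
      by_cases hz : z ∈ A <;>
        simp [SimpleFunc.piecewise_apply, Set.indicator_apply, hz]
    rw [hcoe]
    have hsm : A.indicator (fun _ => c) = c • (A.indicator fun _ => (1:ℂ)) := by
      funext z
      by_cases hz : z ∈ A <;> simp [Set.indicator_apply, hz]
    rw [hsm, hsmul c _ (memL_indicator N hA), hEint A hA]
    calc c * ∫ z in A, h z ∂m = ∫ z in A, c * h z ∂m := by
          have h4 := integral_smul (μ := m.restrict A) c h
          simpa [smul_eq_mul] using h4.symm
      _ = ∫ z, A.indicator (fun z => c * h z) z ∂m := (integral_indicator hA).symm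
      _ = ∫ z, (c • (A.indicator fun _ => (1:ℂ))) z * h z ∂m := by
          refine integral_congr_ae (ae_of_all _ fun z => ?_)
          by_cases hz : z ∈ A <;> simp [Set.indicator_apply, hz]
  | @add f g hfg ihf ihg =>
    rw [SimpleFunc.coe_add, hadd _ _ (memL_simple N f) (memL_simple N g), ihf, ihg,
      ← integral_add (hmul f) (hmul g)]
    refine integral_congr_ae (ae_of_all _ fun z => ?_)
    simp [add_mul]

include hadd hsmul hae hC hbound hN in
lemma rep_bdd {h : 𝕋 → ℂ} (hint : Integrable h m)
    (hEint : ∀ E : Set 𝕋, MeasurableSet E → φ (E.indicator fun _ => (1:ℂ)) = ∫ z in E, h z ∂m)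
    {f : 𝕋 → ℂ} (hf : AEMeasurable f m) (M : ℝ) (hb : ∀ᵐ z ∂m, ‖f z‖ ≤ M) :
    φ f = ∫ z, f z * h z ∂m := by
  have hbM : ∀ᵐ z ∂m, ‖f z‖ ≤ |M| := hb.mono fun z hz => hz.trans (le_abs_self M)
  set f' := hf.mk f with hf'def
  have hf'meas : Measurable f' := hf.measurable_mk
  have hfe : f =ᵐ[m] f' := hf.ae_eq_mk
  have hb' : ∀ᵐ z ∂m, ‖f' z‖ ≤ |M| := by
    filter_upwards [hbM, hfe] with z h1 h2
    rw [← h2]; exact h1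
  have hmemf : MemL N.α f := memL_of_bound N hf |M| hbM
  have hmemf' : MemL N.α f' := memL_of_bound N hf'meas.aemeasurable |M| hb'
  have hφf : φ f = φ f' := hae _ _ hmemf hmemf' hfe
  have hIf : ∫ z, f z * h z ∂m = ∫ z, f' z * h z ∂m :=
    integral_congr_ae (by filter_upwards [hfe] with z hz; simp only [hz])
  rw [hφf, hIf]
  set s : ℕ → SimpleFunc 𝕋 ℂ := fun n =>
    SimpleFunc.approxOn f' hf'meas Set.univ 0 (Set.mem_univ 0) n with hsdef
  have htend : ∀ z, Filter.Tendsto (fun n => s n z) Filter.atTop (nhds (f' z)) := fun z =>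
    SimpleFunc.tendsto_approxOn hf'meas (Set.mem_univ 0) (by simp)
  have hdist : ∀ n z, ‖s n z - f' z‖ ≤ ‖f' z‖ := by
    intro n z
    have h1 := SimpleFunc.edist_approxOn_le hf'meas (Set.mem_univ 0) z n
    rw [edist_nndist, edist_nndist] at h1
    have h2 : nndist (s n z) (f' z) ≤ nndist 0 (f' z) := by exact_mod_cast h1
    calc ‖s n z - f' z‖ = dist (s n z) (f' z) := (dist_eq_norm _ _).symm
      _ ≤ dist (0:ℂ) (f' z) := h2
      _ = ‖f' z‖ := by rw [dist_zero_left]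
  have hsnorm : ∀ n, ∀ᵐ z ∂m, ‖s n z‖ ≤ 2 * |M| := by
    intro n
    filter_upwards [hb'] with z hz
    have h3 : ‖s n z‖ ≤ ‖s n z - f' z‖ + ‖f' z‖ := by
      have := norm_add_le (s n z - f' z) (f' z)
      simpa using this
    calc ‖s n z‖ ≤ ‖s n z - f' z‖ + ‖f' z‖ := h3
      _ ≤ ‖f' z‖ + ‖f' z‖ := add_le_add_left (hdist n z) _
      _ ≤ |M| + |M| := add_le_add hz hz
      _ = 2 * |M| := (two_mul _).symm
  have htendI : Filter.Tendsto (fun n => ∫ z, s n z * h z ∂m) Filter.atTop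
      (nhds (∫ z, f' z * h z ∂m)) := by
    refine tendsto_integral_of_dominated_convergence (fun z => (2*|M|) * ‖h z‖)
      (fun n => ((s n).aestronglyMeasurable.mul hint.1)) (hint.norm.const_mul _) ?_ ?_
    · intro n
      filter_upwards [hsnorm n] with z hz
      rw [norm_mul]
      exact mul_le_mul_of_nonneg_right hz (norm_nonneg _)
    · exact ae_of_all _ fun z => (htend z).mul_const _
  have htendφ : Filter.Tendsto (fun n => φ ⇑(s n)) Filter.atTop (nhds (φ f')) := by
    rw [Metric.tendsto_nhds]
    intro ε hε
    set η := ENNReal.ofReal (ε/2) / (C + 1) with hη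
    have hCtop : C + 1 ≠ ⊤ := ENNReal.add_ne_top.2 ⟨hC, ENNReal.one_ne_top⟩
    have hηpos : 0 < η := ENNReal.div_pos (ENNReal.ofReal_pos.2 (half_pos hε)).ne' hCtop
    have hηfin : η ≠ ∞ := by
      rw [hη]
      exact (ENNReal.div_lt_top ENNReal.ofReal_ne_top (by simp)).ne
    have hη2pos : (0:ℝ≥0∞) < η / 2 := ENNReal.div_pos hηpos.ne' (by norm_num)
    have hη2fin : η / 2 ≠ ∞ := (ENNReal.div_lt_top hηfin (by norm_num)).ne
    set εr := (η/2).toReal with hεrdef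
    have hεrpos : 0 < εr := ENNReal.toReal_pos hη2pos.ne' hη2fin
    have hofεr : ENNReal.ofReal εr = η/2 := ENNReal.ofReal_toReal hη2fin
    set M2 : ℝ≥0 := (2*|M|).toNNReal with hM2
    have hM2top : ((M2:ℝ≥0∞) + 1) ≠ ⊤ := ENNReal.add_ne_top.2 ⟨ENNReal.coe_ne_top, ENNReal.one_ne_top⟩
    set ε' := (η/2) / ((M2:ℝ≥0∞) + 1) with hε'
    have hε'pos : 0 < ε' := ENNReal.div_pos hη2pos.ne' hM2top
    obtain ⟨δ, hδpos, hδ⟩ := hN ε' hε'pos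
    have hmeasconv : TendstoInMeasure m (fun n => ⇑(s n)) Filter.atTop f' :=
      tendstoInMeasure_of_tendsto_ae (fun n => (s n).aestronglyMeasurable)
        (ae_of_all _ htend)
    have hev : ∀ᶠ n in Filter.atTop, m {z | εr ≤ dist (s n z) (f' z)} < δ := by
      refine ((hmeasconv (ENNReal.ofReal εr) (ENNReal.ofReal_pos.2 hεrpos)).eventually
        (gt_mem_nhds hδpos)).mono fun n hn => ?_
      have hset : {z | εr ≤ dist (s n z) (f' z)}
          = {z | ENNReal.ofReal εr ≤ edist (s n z) (f' z)} := Set.ext fun z => by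
        simp only [Set.mem_setOf_eq, edist_dist, ENNReal.ofReal_le_ofReal_iff dist_nonneg]
      rw [hset]; exact hn
    filter_upwards [hev] with n hn
    set E := {z | εr ≤ dist (s n z) (f' z)} with hEdef
    have hEmeas : MeasurableSet E := by
      have hd : Measurable fun z => dist (s n z) (f' z) := (s n).measurable.dist hf'meas
      exact measurableSet_le measurable_const hd
    have hαE : N.α (E.indicator fun _ => (1:ℂ)) < ε' := hδ E hEmeas hn
    -- the majorant
    set G : 𝕋 → ℂ := (fun _ => ((εr:ℝ):ℂ)) + fun z => E.indicator (fun _ => ((2*|M|:ℝ):ℂ)) z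
      with hGdef
    have hGmeas : AEMeasurable G m :=
      (aemeasurable_const.add ((measurable_const.indicator hEmeas).aemeasurable))
    have hmaj : ∀ᵐ z ∂m, ‖(f' - ⇑(s n)) z‖ ≤ ‖G z‖ := by
      filter_upwards [hb'] with z hz
      by_cases hzE : z ∈ E
      · have : G z = ((εr + 2*|M| : ℝ) : ℂ) := by
          simp only [hGdef, Pi.add_apply, Set.indicator_of_mem hzE]
          push_cast; ring
        rw [this, Complex.norm_real, Real.norm_eq_abs,
          abs_of_nonneg (by positivity)]
        calc ‖(f' - ⇑(s n)) z‖ = ‖s n z - f' z‖ := by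
              rw [Pi.sub_apply, norm_sub_rev]
          _ ≤ ‖f' z‖ := hdist n z
          _ ≤ |M| := hz
          _ ≤ εr + 2*|M| := by linarith [abs_nonneg M, hεrpos]
      · have : G z = ((εr : ℝ) : ℂ) := by
          simp only [hGdef, Pi.add_apply, Set.indicator_of_notMem hzE]
          ring
        rw [this, Complex.norm_real, Real.norm_eq_abs, abs_of_nonneg hεrpos.le]
        have hlt : dist (s n z) (f' z) < εr := lt_of_not_ge fun hc => hzE hc
        calc ‖(f' - ⇑(s n)) z‖ = dist (s n z) (f' z) := by
              rw [Pi.sub_apply, norm_sub_rev, ← dist_eq_norm]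
          _ ≤ εr := hlt.le
    have hsub_meas : AEMeasurable (f' - ⇑(s n)) m :=
      (hf'meas.sub (s n).measurable).aemeasurable
    have hα1 : N.α (f' - ⇑(s n)) ≤ N.α G := alpha_mono N hsub_meas hGmeas hmaj
    have hα2 : N.α G ≤ η := by
      have hT := N.add_le (fun _ => ((εr:ℝ):ℂ)) (fun z => E.indicator (fun _ => ((2*|M|:ℝ):ℂ)) z)
      have hconst : N.α (fun _ : 𝕋 => ((εr:ℝ):ℂ)) = ENNReal.ofReal εr := by
        have h5 : (fun _ : 𝕋 => ((εr:ℝ):ℂ)) = (fun _ : 𝕋 => ((εr.toNNReal : ℝ) : ℂ)) := by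
          funext z
          rw [Real.coe_toNNReal _ hεrpos.le]
        rw [h5, alpha_const N εr.toNNReal]
        rw [ENNReal.ofReal, ENNReal.coe_inj]  -- ofReal εr = coe toNNReal
      have hind : N.α (fun z => E.indicator (fun _ => ((2*|M|:ℝ):ℂ)) z)
          ≤ (M2 : ℝ≥0∞) * N.α (E.indicator fun _ => (1:ℂ)) := by
        have h6 : (fun z => E.indicator (fun _ => ((2*|M|:ℝ):ℂ)) z)
            = ((2*|M|:ℝ):ℂ) • (E.indicator fun _ => (1:ℂ)) := by
          funext z
          by_cases hz : z ∈ E <;> simp [Set.indicator_apply, hz]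
        rw [h6, N.smul_eq]
        apply mul_le_mul_left
        rw [hM2]
        have h7 : ‖((2*|M|:ℝ):ℂ)‖₊ = (2*|M|).toNNReal := by
          ext
          simp [Real.norm_eq_abs, abs_of_nonneg (by positivity : (0:ℝ) ≤ 2*|M|),
            Real.coe_toNNReal _ (by positivity : (0:ℝ) ≤ 2*|M|)]
        rw [h7]
      calc N.α G ≤ N.α (fun _ : 𝕋 => ((εr:ℝ):ℂ)) + N.α (fun z => E.indicator (fun _ => ((2*|M|:ℝ):ℂ)) z) := hT
        _ ≤ ENNReal.ofReal εr + (M2 : ℝ≥0∞) * N.α (E.indicator fun _ => (1:ℂ)) := by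
            rw [hconst]
            exact add_le_add_right hind _
        _ ≤ η/2 + ((M2:ℝ≥0∞) + 1) * ε' := by
            rw [hofεr]
            refine add_le_add_right ?_ _
            exact mul_le_mul' le_self_add hαE.le
        _ = η/2 + η/2 := by
            rw [hε', ENNReal.mul_div_cancel (by simp) hM2top]
        _ = η := ENNReal.add_halves η
    -- conclude
    obtain ⟨B, hB⟩ := (s n).exists_forall_norm_le
    have hmem_sub : MemL N.α (f' - ⇑(s n)) := by
      refine memL_of_bound N hsub_meas (|M| + B) ?_
      filter_upwards [hb'] with z hz
      calc ‖(f' - ⇑(s n)) z‖ ≤ ‖f' z‖ + ‖s n z‖ := by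
            rw [Pi.sub_apply]; exact norm_sub_le _ _
        _ ≤ |M| + B := add_le_add hz (hB z)
    have hsplit : φ f' = φ (f' - ⇑(s n)) + φ ⇑(s n) := by
      have h8 := hadd _ _ hmem_sub (memL_simple N (s n))
      rw [sub_add_cancel] at h8
      exact h8
    have hbnd : (‖φ (f' - ⇑(s n))‖₊ : ℝ≥0∞) ≤ ENNReal.ofReal (ε/2) := by
      calc (‖φ (f' - ⇑(s n))‖₊ : ℝ≥0∞) ≤ C * N.α (f' - ⇑(s n)) := hbound _ hmem_sub
        _ ≤ C * η := mul_le_mul_right (hα1.trans hα2) _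
        _ ≤ (C+1) * η := mul_le_mul_left le_self_add _
        _ = ENNReal.ofReal (ε/2) := by
            rw [hη, ENNReal.mul_div_cancel (by simp) hCtop]
    have hbndr : ‖φ (f' - ⇑(s n))‖ ≤ ε/2 := by
      rw [← enorm_eq_nnnorm, ← ofReal_norm] at hbnd
      exact (ENNReal.ofReal_le_ofReal_iff (half_pos hε).le).1 hbnd
    rw [dist_eq_norm]
    have h9 : φ ⇑(s n) - φ f' = -(φ (f' - ⇑(s n))) := by
      rw [hsplit]; ring
    rw [h9, norm_neg]
    exact lt_of_le_of_lt hbndr (half_lt_self hε)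
  have heq : ∀ n, φ ⇑(s n) = ∫ z, s n z * h z ∂m := fun n =>
    rep_simple N hadd hsmul hae hint hEint (s n)
  exact tendsto_nhds_unique (htendφ.congr heq) htendI

include hN hadd hsmul hae hC hbound in
lemma csgn_trick {h : 𝕋 → ℂ} (hint : Integrable h m)
    (hEint : ∀ E : Set 𝕋, MeasurableSet E → φ (E.indicator fun _ => (1:ℂ)) = ∫ z in E, h z ∂m)
    {g : 𝕋 → ℂ} (hg : MemLp g ⊤ m) :
    ∃ F : 𝕋 → ℂ, MemL N.α F ∧ N.α F ≤ N.α g ∧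
      (∫⁻ z, (‖h z * g z‖₊ : ℝ≥0∞) ∂m) = (‖φ F‖₊ : ℝ≥0∞) := by
  obtain ⟨M, hM0, hb⟩ := exists_ae_bound hg
  have hgm : AEMeasurable g m := hg.aestronglyMeasurable.aemeasurable
  set F : 𝕋 → ℂ := fun z => g z * csgn (h z * g z) with hF
  have hFmeas : AEMeasurable F m :=
    hgm.mul (measurable_csgn.comp_aemeasurable (hint.aemeasurable.mul hgm))
  have hFle : ∀ z, ‖F z‖ ≤ ‖g z‖ := fun z => by
    calc ‖F z‖ = ‖g z‖ * ‖csgn (h z * g z)‖ := norm_mul _ _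
      _ ≤ ‖g z‖ * 1 := mul_le_mul_of_nonneg_left (norm_csgn_le _) (norm_nonneg _)
      _ = ‖g z‖ := mul_one _
  have hFb : ∀ᵐ z ∂m, ‖F z‖ ≤ M := hb.mono fun z hz => (hFle z).trans hz
  have hFmem : MemL N.α F := memL_of_bound N hFmeas M hFb
  have hFα : N.α F ≤ N.α g := alpha_mono N hFmeas hgm (ae_of_all _ hFle)
  refine ⟨F, hFmem, hFα, ?_⟩
  have hrepF : φ F = ∫ z, F z * h z ∂m :=
    rep_bdd N hN hadd hsmul hae hC hbound hint hEint hFmeas M hFb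
  have hFh : ∀ z, F z * h z = ((‖h z * g z‖ : ℝ) : ℂ) := by
    intro z
    calc F z * h z = (h z * g z) * csgn (h z * g z) := by rw [hF]; ring
      _ = _ := mul_csgn _
  have hIg : Integrable (fun z => h z * g z) m := by
    have h2 := Integrable.bdd_mul (c := M) hint hg.aestronglyMeasurable hb
    refine h2.congr (ae_of_all _ fun z => ?_)
    ring
  have hval : ∫ z, F z * h z ∂m = ((∫ z, ‖h z * g z‖ ∂m : ℝ) : ℂ) := by
    rw [show (fun z => F z * h z) = fun z => ((‖h z * g z‖ : ℝ):ℂ) from funext hFh]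
    exact integral_ofReal
  rw [hrepF, hval]
  have hnn : (0:ℝ) ≤ ∫ z, ‖h z * g z‖ ∂m := integral_nonneg fun z => norm_nonneg _
  rw [Complex.nnnorm_real, ← enorm_eq_nnnorm, Real.enorm_eq_ofReal hnn,
    ofReal_integral_eq_lintegral_ofReal hIg.norm (ae_of_all _ fun z => norm_nonneg _)]
  exact lintegral_congr fun z => (ofReal_norm _).symm

include hN hadd hsmul hae hC hbound in
lemma rep_full {h : 𝕋 → ℂ} (hint : Integrable h m)
    (hEint : ∀ E : Set 𝕋, MeasurableSet E → φ (E.indicator fun _ => (1:ℂ)) = ∫ z in E, h z ∂m)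
    (hD : dualOf N.α h ≠ ∞) :
    ∀ f : 𝕋 → ℂ, MemL N.α f → φ f = ∫ z, f z * h z ∂m := by
  intro f hf
  obtain ⟨⟨hfm, hfα⟩, happrox⟩ := hf
  have hIf : Integrable (fun z => f z * h z) m :=
    (converse_part N hint.aemeasurable hD ⟨⟨hfm, hfα⟩, happrox⟩).1
  have hkey : ∀ ε : ℝ, 0 < ε → ‖φ f - ∫ z, f z * h z ∂m‖ ≤ ε := by
    intro ε hε
    set D := dualOf N.α h with hDdef
    have hCtop : C + 1 ≠ ⊤ := ENNReal.add_ne_top.2 ⟨hC, ENNReal.one_ne_top⟩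
    have hDtop : D + 1 ≠ ⊤ := ENNReal.add_ne_top.2 ⟨hD, ENNReal.one_ne_top⟩
    set η := min (ENNReal.ofReal (ε/2) / (C + 1)) (ENNReal.ofReal (ε/2) / (D + 1)) with hη
    have hηpos : 0 < η := lt_min
      (ENNReal.div_pos (ENNReal.ofReal_pos.2 (half_pos hε)).ne' hCtop)
      (ENNReal.div_pos (ENNReal.ofReal_pos.2 (half_pos hε)).ne' hDtop)
    have hηtop : η ≠ ⊤ := by
      refine ne_top_of_le_ne_top ?_ (min_le_left _ _)
      exact (ENNReal.div_lt_top ENNReal.ofReal_ne_top (by simp)).ne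
    obtain ⟨g, hgtop, hαfg⟩ := happrox η hηpos
    have hgm : AEMeasurable g m := hgtop.aestronglyMeasurable.aemeasurable
    obtain ⟨Mg, hMg0, hgb⟩ := exists_ae_bound hgtop
    have hgmem : MemL N.α g := memL_of_memtop N hgtop
    have hsubmem : MemL N.α (f - g) := by
      refine ⟨⟨hfm.sub hgm, (hαfg.trans (lt_top_iff_ne_top.2 hηtop)).ne⟩, ?_⟩
      intro ε' hε'
      obtain ⟨g', hg', hαfg'⟩ := happrox ε' hε'
      exact ⟨g' - g, hg'.sub hgtop, by rw [show f - g - (g' - g) = f - g' by abel]; exact hαfg'⟩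
    have hφsplit : φ f = φ (f - g) + φ g := by
      have h8 := hadd _ _ hsubmem hgmem
      rw [sub_add_cancel] at h8
      exact h8
    have hgrep : φ g = ∫ z, g z * h z ∂m :=
      rep_bdd N hN hadd hsmul hae hC hbound hint hEint hgm Mg hgb
    have hIg : Integrable (fun z => g z * h z) m :=
      Integrable.bdd_mul (c := Mg) hint hgtop.aestronglyMeasurable hgb
    have hIsub : ∫ z, (f - g) z * h z ∂m = ∫ z, f z * h z ∂m - ∫ z, g z * h z ∂m := by
      rw [← integral_sub hIf hIg]
      refine integral_congr_ae (ae_of_all _ fun z => ?_)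
      simp [sub_mul]
    have hid : φ f - ∫ z, f z * h z ∂m
        = φ (f - g) - ∫ z, (f - g) z * h z ∂m := by
      rw [hφsplit, hgrep, hIsub]
      ring
    have hb1 : ‖φ (f - g)‖ ≤ ε/2 := by
      have h10 : (‖φ (f - g)‖₊ : ℝ≥0∞) ≤ ENNReal.ofReal (ε/2) := by
        calc (‖φ (f - g)‖₊ : ℝ≥0∞) ≤ C * N.α (f - g) := hbound _ hsubmem
          _ ≤ C * η := mul_le_mul_right hαfg.le _
          _ ≤ (C + 1) * (ENNReal.ofReal (ε/2) / (C + 1)) :=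
              mul_le_mul' le_self_add (min_le_left _ _)
          _ = ENNReal.ofReal (ε/2) := ENNReal.mul_div_cancel (by simp) hCtop
      rw [← enorm_eq_nnnorm, ← ofReal_norm] at h10
      exact (ENNReal.ofReal_le_ofReal_iff (half_pos hε).le).1 h10
    have hb2 : ‖∫ z, (f - g) z * h z ∂m‖ ≤ ε/2 := by
      have h11 : (‖∫ z, (f - g) z * h z ∂m‖₊ : ℝ≥0∞) ≤ ENNReal.ofReal (ε/2) := by
        calc (‖∫ z, (f - g) z * h z ∂m‖₊ : ℝ≥0∞)
            ≤ ∫⁻ z, (‖(f - g) z * h z‖₊ : ℝ≥0∞) ∂m := enorm_integral_le_lintegral_enorm _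
          _ ≤ D * N.α (f - g) := lintegral_mul_le_dual N hint.aemeasurable (hfm.sub hgm) hD
          _ ≤ D * η := mul_le_mul_right hαfg.le _
          _ ≤ (D + 1) * (ENNReal.ofReal (ε/2) / (D + 1)) :=
              mul_le_mul' le_self_add (min_le_right _ _)
          _ = ENNReal.ofReal (ε/2) := ENNReal.mul_div_cancel (by simp) hDtop
      rw [← enorm_eq_nnnorm, ← ofReal_norm] at h11
      exact (ENNReal.ofReal_le_ofReal_iff (half_pos hε).le).1 h11
    calc ‖φ f - ∫ z, f z * h z ∂m‖
        = ‖φ (f - g) - ∫ z, (f - g) z * h z ∂m‖ := by rw [hid]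
      _ ≤ ‖φ (f - g)‖ + ‖∫ z, (f - g) z * h z ∂m‖ := norm_sub_le _ _
      _ ≤ ε/2 + ε/2 := add_le_add hb1 hb2
      _ = ε := add_halves ε
  have h0 : ‖φ f - ∫ z, f z * h z ∂m‖ ≤ 0 :=
    le_of_forall_pos_le_add fun ε hε => by simpa using hkey ε hε
  have := le_antisymm h0 (norm_nonneg _)
  rwa [norm_eq_zero, sub_eq_zero] at this

include hN hadd hsmul hae hC hbound in
lemma main_rep : ∃ h : 𝕋 → ℂ, AEMeasurable h m ∧ dualOf N.α h ≠ ∞ ∧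
    (∀ f : 𝕋 → ℂ, MemL N.α f → φ f = ∫ z, f z * h z ∂m) ∧
    (dualOf N.α h
      = ⨆ (f : 𝕋 → ℂ) (_ : MemL N.α f) (_ : N.α f ≤ 1), (‖φ f‖₊ : ℝ≥0∞)) ∧
    (∀ h' : 𝕋 → ℂ, AEMeasurable h' m →
      (∀ f : 𝕋 → ℂ, MemL N.α f → φ f = ∫ z, f z * h' z ∂m) → h' =ᵐ[m] h) := by
  obtain ⟨h, hint, hEint⟩ := exists_density N hN hadd hsmul hae hC hbound
  have hDle : dualOf N.α h ≤ C := by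
    rw [dualOf]
    refine iSup_le fun g => iSup_le fun hg => iSup_le fun hα => ?_
    obtain ⟨F, hFmem, hFα, hFeq⟩ := csgn_trick N hN hadd hsmul hae hC hbound hint hEint hg
    rw [hFeq]
    calc (‖φ F‖₊:ℝ≥0∞) ≤ C * N.α F := hbound _ hFmem
      _ ≤ C * 1 := mul_le_mul_right (hFα.trans hα) _
      _ = C := mul_one _
  have hD : dualOf N.α h ≠ ∞ := (hDle.trans_lt (lt_top_iff_ne_top.2 hC)).ne
  have hrep := rep_full N hN hadd hsmul hae hC hbound hint hEint hD
  refine ⟨h, hint.aemeasurable, hD, hrep, ?_, ?_⟩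
  · refine le_antisymm ?_ ?_
    · rw [dualOf]
      refine iSup_le fun g => iSup_le fun hg => iSup_le fun hα => ?_
      obtain ⟨F, hFmem, hFα, hFeq⟩ := csgn_trick N hN hadd hsmul hae hC hbound hint hEint hg
      rw [hFeq]
      refine le_iSup_of_le F ?_
      rw [iSup_pos hFmem, iSup_pos (hFα.trans hα)]
    · refine iSup_le fun f => iSup_le fun hf => iSup_le fun hα => ?_
      rw [hrep f hf]
      calc (‖∫ z, f z * h z ∂m‖₊:ℝ≥0∞)
          ≤ dualOf N.α h * N.α f := (converse_part N hint.aemeasurable hD hf).2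
        _ ≤ dualOf N.α h * 1 := mul_le_mul_right hα _
        _ = dualOf N.α h := mul_one _
  · intro h' hh' hrep'
    set h'' := hh'.mk h' with h''def
    have hh''meas : Measurable h'' := hh'.measurable_mk
    have hh'e : h' =ᵐ[m] h'' := hh'.ae_eq_mk
    set F : ℕ → 𝕋 → ℂ := fun n z => if ‖h'' z‖ ≤ (n:ℝ) then csgn (h'' z) else 0 with hFdef
    have hFapp : ∀ n z, F n z = if ‖h'' z‖ ≤ (n:ℝ) then csgn (h'' z) else 0 := fun n z => rfl
    have hFmeas : ∀ n, Measurable (F n) := fun n =>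
      Measurable.ite (measurableSet_le hh''meas.norm measurable_const)
        (measurable_csgn.comp hh''meas) measurable_const
    have hFb : ∀ n z, ‖F n z‖ ≤ 1 := by
      intro n z
      rw [hFapp]
      split_ifs with hc
      · exact norm_csgn_le _
      · simp
    have hFmem : ∀ n, MemL N.α (F n) := fun n =>
      memL_of_bound N (hFmeas n).aemeasurable 1 (ae_of_all _ (hFb n))
    have hαF : ∀ n, N.α (F n) ≤ 1 := fun n => by
      have h12 := alpha_le_of_bound N (hFmeas n).aemeasurable 1
        (ae_of_all _ (by simpa using hFb n))
      simpa using h12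
    have hrel : ∀ n z, F n z * h'' z
        = (((if ‖h'' z‖ ≤ (n:ℝ) then ‖h'' z‖ else 0) : ℝ) : ℂ) := by
      intro n z
      rw [hFapp]
      split_ifs with hc
      · rw [mul_comm]
        exact mul_csgn _
      · simp
    have hIn : ∀ n, Integrable (fun z => F n z * h'' z) m := by
      intro n
      refine (integrable_const ((n:ℝ))).mono'
        (((hFmeas n).mul hh''meas).aestronglyMeasurable) (ae_of_all _ fun z => ?_)
      rw [hrel n z, Complex.norm_real, Real.norm_eq_abs]
      split_ifs with hc
      · rw [abs_of_nonneg (norm_nonneg _)]; exact hc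
      · simp
    have heqn : ∀ n, ∫ z, F n z * h'' z ∂m = ∫ z, F n z * h z ∂m := by
      intro n
      have h13 : ∫ z, F n z * h'' z ∂m = ∫ z, F n z * h' z ∂m :=
        integral_congr_ae (by filter_upwards [hh'e] with z hz; rw [hz])
      rw [h13, ← hrep' (F n) (hFmem n), hrep (F n) (hFmem n)]
    have hbnd : ∀ n, ∫⁻ z, (‖F n z * h'' z‖₊:ℝ≥0∞) ∂m ≤ dualOf N.α h := by
      intro n
      have e1 : ∫⁻ z, (‖F n z * h'' z‖₊:ℝ≥0∞) ∂m
          = ENNReal.ofReal (∫ z, ‖F n z * h'' z‖ ∂m) := by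
        rw [ofReal_integral_eq_lintegral_ofReal (hIn n).norm
          (ae_of_all _ fun z => norm_nonneg _)]
        exact lintegral_congr fun z => (ofReal_norm _).symm
      set r := ∫ z, (if ‖h'' z‖ ≤ (n:ℝ) then ‖h'' z‖ else 0) ∂m with hr
      have hrint : Integrable (fun z => (if ‖h'' z‖ ≤ (n:ℝ) then ‖h'' z‖ else 0)) m := by
        refine (integrable_const ((n:ℝ))).mono'
          ((hh''meas.norm.ite (measurableSet_le hh''meas.norm measurable_const)
            measurable_const).aestronglyMeasurable) (ae_of_all _ fun z => ?_)
        rw [Real.norm_eq_abs]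
        split_ifs with hc
        · rw [abs_of_nonneg (norm_nonneg _)]; exact hc
        · simp
      have hrnn : 0 ≤ r := integral_nonneg fun z => by
        dsimp only
        split_ifs with hc
        · exact norm_nonneg _
        · exact le_rfl
      have e2a : ∫ z, F n z * h'' z ∂m = ((r:ℝ):ℂ) := by
        rw [show (fun z => F n z * h'' z)
          = fun z => (((if ‖h'' z‖ ≤ (n:ℝ) then ‖h'' z‖ else 0) : ℝ):ℂ) from funext (hrel n)]
        exact integral_ofReal
      have e2b : ∫ z, ‖F n z * h'' z‖ ∂m = r := by
        refine integral_congr_ae (ae_of_all _ fun z => ?_)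
        dsimp only
        rw [hrel n z, Complex.norm_real, Real.norm_eq_abs]
        apply abs_of_nonneg
        split_ifs with hc
        · exact norm_nonneg _
        · exact le_rfl
      calc ∫⁻ z, (‖F n z * h'' z‖₊:ℝ≥0∞) ∂m = ENNReal.ofReal r := by rw [e1, e2b]
        _ = (‖∫ z, F n z * h z ∂m‖₊ : ℝ≥0∞) := by
            rw [← heqn n, e2a, Complex.nnnorm_real, ← enorm_eq_nnnorm, Real.enorm_eq_ofReal hrnn]
        _ ≤ dualOf N.α h * N.α (F n) :=
            (converse_part N hint.aemeasurable hD (hFmem n)).2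
        _ ≤ dualOf N.α h * 1 := mul_le_mul_right (hαF n) _
        _ = dualOf N.α h := mul_one _
    -- monotone convergence to show h'' ∈ L¹
    have hmono : ∀ z, Monotone fun n => (‖F n z * h'' z‖₊ : ℝ≥0∞) := by
      intro z i j hij
      dsimp only
      rw [hrel i z, hrel j z]
      by_cases hc : ‖h'' z‖ ≤ (i:ℝ)
      · have hcj : ‖h'' z‖ ≤ (j:ℝ) := hc.trans (Nat.cast_le.2 hij)
        rw [if_pos hc, if_pos hcj]
      · rw [if_neg hc]
        simp
    have hcast : ∀ w : ℂ, ‖((‖w‖ : ℝ) : ℂ)‖₊ = ‖w‖₊ := fun w => by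
      rw [Complex.nnnorm_real]
      ext
      simp [Real.norm_eq_abs, abs_of_nonneg (norm_nonneg w)]
    have habs : ∀ w : ℂ, ‖‖w‖‖₊ = ‖w‖₊ := fun w => by
      ext
      rw [coe_nnnorm, coe_nnnorm, Real.norm_eq_abs, abs_of_nonneg (norm_nonneg w)]
    have hsup : ∀ z, (⨆ n, (‖F n z * h'' z‖₊ : ℝ≥0∞)) = (‖h'' z‖₊:ℝ≥0∞) := by
      intro z
      refine le_antisymm (iSup_le fun n => ?_) ?_
      · rw [hrel n z]
        split_ifs with hc
        · simp [hcast, habs]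
        · simp
      · have hc : ‖h'' z‖ ≤ ((⌈‖h'' z‖⌉₊ : ℕ):ℝ) := Nat.le_ceil _
        refine le_iSup_of_le ⌈‖h'' z‖⌉₊ ?_
        rw [hrel _ z, if_pos hc]
        simp [hcast, habs]
    have hfin : ∫⁻ z, (‖h'' z‖₊:ℝ≥0∞) ∂m ≤ dualOf N.α h := by
      calc ∫⁻ z, (‖h'' z‖₊:ℝ≥0∞) ∂m
          = ∫⁻ z, ⨆ n, (‖F n z * h'' z‖₊:ℝ≥0∞) ∂m := lintegral_congr fun z => (hsup z).symm
        _ = ⨆ n, ∫⁻ z, (‖F n z * h'' z‖₊:ℝ≥0∞) ∂m :=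
            lintegral_iSup' (fun n => ((hFmeas n).aemeasurable.mul hh''meas.aemeasurable).enorm)
              (ae_of_all _ hmono)
        _ ≤ dualOf N.α h := iSup_le hbnd
    have hint'' : Integrable h'' m :=
      ⟨hh''meas.aestronglyMeasurable, hfin.trans_lt (lt_top_iff_ne_top.2 hD)⟩
    have hint' : Integrable h' m := hint''.congr hh'e.symm
    have hsubint : Integrable (fun z => h' z - h z) m := hint'.sub hint
    have hsetint : ∀ E : Set 𝕋, MeasurableSet E → ∫ z in E, (h' z - h z) ∂m = 0 := by
      intro E hE
      have hmemE := memL_indicator N hE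
      have hEq : ∫ z, (E.indicator fun _ => (1:ℂ)) z * h' z ∂m
          = ∫ z, (E.indicator fun _ => (1:ℂ)) z * h z ∂m := by
        rw [← hrep' _ hmemE, hrep _ hmemE]
      have hconv : ∀ k : 𝕋 → ℂ, ∫ z, (E.indicator fun _ => (1:ℂ)) z * k z ∂m
          = ∫ z in E, k z ∂m := by
        intro k
        rw [← integral_indicator hE]
        refine integral_congr_ae (ae_of_all _ fun z => ?_)
        by_cases hz : z ∈ E <;> simp [Set.indicator_apply, hz]
      rw [integral_sub hint'.integrableOn hint.integrableOn, sub_eq_zero,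
        ← hconv h', ← hconv h, hEq]
    have hz := ae_eq_zero_of_forall_setIntegral_eq_of_sigmaFinite
      (fun s hs _ => hsubint.integrableOn) (fun s hs _ => hsetint s hs)
    filter_upwards [hz] with z hz2
    have h14 : h' z - h z = 0 := hz2
    exact sub_eq_zero.1 h14
end Construct
end DualProofAux

/-- The dual space of `L^α(𝕋)` is `ℒ^{α′}(𝕋)`: every bounded linear
functional on `L^α(𝕋)` is integration against a unique `h ∈ ℒ^{α′}(𝕋)` with `‖φ‖ = α′(h)`,
and conversely every such `h` induces a bounded functional. -/
theorem dual_space_of_Lalpha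
    (N : RotNorm) (hN : IsContNorm N.α) :
    (∀ φ : (𝕋 → ℂ) → ℂ,
      (∀ f g : 𝕋 → ℂ, MemL N.α f → MemL N.α g → φ (f + g) = φ f + φ g) →
      (∀ (c : ℂ) (f : 𝕋 → ℂ), MemL N.α f → φ (c • f) = c * φ f) →
      (∀ f g : 𝕋 → ℂ, MemL N.α f → MemL N.α g → f =ᵐ[m] g → φ f = φ g) →
      (∃ C : ℝ≥0∞, C ≠ ∞ ∧ ∀ f : 𝕋 → ℂ, MemL N.α f → (‖φ f‖₊ : ℝ≥0∞) ≤ C * N.α f) →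
      ∃ h : 𝕋 → ℂ, AEMeasurable h m ∧ dualOf N.α h ≠ ∞ ∧
        (∀ f : 𝕋 → ℂ, MemL N.α f → φ f = ∫ z, f z * h z ∂m) ∧
        (dualOf N.α h
          = ⨆ (f : 𝕋 → ℂ) (_ : MemL N.α f) (_ : N.α f ≤ 1), (‖φ f‖₊ : ℝ≥0∞)) ∧
        (∀ h' : 𝕋 → ℂ, AEMeasurable h' m →
          (∀ f : 𝕋 → ℂ, MemL N.α f → φ f = ∫ z, f z * h' z ∂m) → h' =ᵐ[m] h)) ∧
    (∀ h : 𝕋 → ℂ, AEMeasurable h m → dualOf N.α h ≠ ∞ →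
      ∀ f : 𝕋 → ℂ, MemL N.α f →
        Integrable (fun z => f z * h z) m ∧
        (‖∫ z, f z * h z ∂m‖₊ : ℝ≥0∞) ≤ dualOf N.α h * N.α f) := by
  constructor
  · rintro φ hadd hsmul hae ⟨C, hC, hbound⟩
    exact DualProofAux.main_rep N hN hadd hsmul hae hC hbound
  · intro h hh hD f hf
    exact DualProofAux.converse_part N hh hD hf

end
end

section
/- Suppose α is a rotationally symmetric norm on L^∞(𝕋) and T : ℒ^α(𝕋) → L^1(𝕋) is a bounded linear operator (bounded from the norm α to ‖·‖₁) such that T(hg) = h·T(g) for every h ∈ L^∞(𝕋) and every g ∈ ℒ^α(𝕋). Then there exists f ∈ ℒ^{α′}(𝕋) such that Tg = fg for every g ∈ ℒ^α(𝕋), and ‖T‖ = α′(f). The same conclusion holds if ℒ^α(𝕋) is replaced by L^α(𝕋). -/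
open MeasureTheory Filter
open scoped ENNReal Real

noncomputable section

lemma alpha_zero (N : RotNorm) : N.α 0 = 0 := by
  have h := N.smul_eq 0 1
  simpa using h

lemma alpha_mono (N : RotNorm) {h g : 𝕋 → ℂ} (hh : AEMeasurable h m)
    (hg : AEMeasurable g m) (hle : ∀ᵐ z ∂m, ‖h z‖ ≤ ‖g z‖) : N.α h ≤ N.α g := by
  rw [N.simple_sup h hh, N.simple_sup g hg]
  refine iSup_le fun s => iSup_le fun hs => le_iSup_of_le s (le_iSup_of_le ?_ le_rfl)
  filter_upwards [hs, hle] with z h1 h2 using h1.trans h2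

/-- A bounded `L^∞(𝕋)`-module map `T : ℒ^α(𝕋) → L¹(𝕋)` (or
`T : L^α(𝕋) → L¹(𝕋)`) is multiplication by some `f ∈ ℒ^{α′}(𝕋)`, and `‖T‖ = α′(f)`. -/
theorem module_map_is_multiplication
    (N : RotNorm) (S : (𝕋 → ℂ) → Prop)
    (hS : (∀ f : 𝕋 → ℂ, S f ↔ MemScriptL N.α f) ∨ (∀ f : 𝕋 → ℂ, S f ↔ MemL N.α f))
    (T : (𝕋 → ℂ) → (𝕋 → ℂ))
    (hmap : ∀ f : 𝕋 → ℂ, S f → Integrable (T f) m)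
    (hadd : ∀ f g : 𝕋 → ℂ, S f → S g → T (f + g) =ᵐ[m] T f + T g)
    (hsmul : ∀ (c : ℂ) (f : 𝕋 → ℂ), S f → T (c • f) =ᵐ[m] c • T f)
    (haeeq : ∀ f g : 𝕋 → ℂ, S f → S g → f =ᵐ[m] g → T f =ᵐ[m] T g)
    (hbdd : ∃ C : ℝ≥0∞, C ≠ ∞ ∧ ∀ f : 𝕋 → ℂ, S f → eLpNorm (T f) 1 m ≤ C * N.α f)
    (hmod : ∀ h : 𝕋 → ℂ, MemLp h ⊤ m → ∀ g : 𝕋 → ℂ, S g → T (h * g) =ᵐ[m] h * T g) :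
    ∃ f : 𝕋 → ℂ, AEMeasurable f m ∧ dualOf N.α f ≠ ∞ ∧
      (∀ g : 𝕋 → ℂ, S g → T g =ᵐ[m] f * g) ∧
      (⨆ (g : 𝕋 → ℂ) (_ : S g) (_ : N.α g ≤ 1), eLpNorm (T g) 1 m) = dualOf N.α f := by
  classical
  -- `1` belongs to `S` in both cases
  have h1script : MemScriptL N.α 1 := ⟨aemeasurable_const, by rw [N.one_eq]; exact ENNReal.one_ne_top⟩
  have hS_of_top : ∀ h : 𝕋 → ℂ, MemLp h ⊤ m → N.α h ≠ ∞ → S h := by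
    intro h hh hfin
    have hscript : MemScriptL N.α h := ⟨hh.aestronglyMeasurable.aemeasurable, hfin⟩
    rcases hS with hS | hS
    · exact (hS h).2 hscript
    · refine (hS h).2 ⟨hscript, fun ε hε => ⟨h, hh, ?_⟩⟩
      rw [sub_self, alpha_zero N]; exact hε
  have h1top : MemLp (1 : 𝕋 → ℂ) ⊤ m := memLp_const 1
  have h1S : S 1 := hS_of_top 1 h1top (by rw [N.one_eq]; exact ENNReal.one_ne_top)
  have hS_sub : ∀ g : 𝕋 → ℂ, S g → MemScriptL N.α g := by
    intro g hg
    rcases hS with hS | hS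
    · exact (hS g).1 hg
    · exact ((hS g).1 hg).1
  set f := T 1 with hf_def
  have hf_int : Integrable f m := hmap 1 h1S
  have hf_meas : AEMeasurable f m := hf_int.aestronglyMeasurable.aemeasurable
  -- truncation functions
  set χ : (𝕋 → ℂ) → ℕ → 𝕋 → ℂ := fun g n z => if ‖g z‖ ≤ n then 1 else 0 with hχ_def
  have hχmeas : ∀ (g : 𝕋 → ℂ), AEMeasurable g m → ∀ n, AEMeasurable (χ g n) m := by
    intro g hg n
    obtain ⟨g', hg', hgg'⟩ := hg
    refine AEMeasurable.congr (f := fun z => if ‖g' z‖ ≤ n then (1:ℂ) else 0) ?_ ?_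
    · exact (Measurable.ite (measurableSet_le hg'.norm measurable_const)
        measurable_const measurable_const).aemeasurable
    · filter_upwards [hgg'] with z hz
      simp only [hχ_def, hz]
  have hχbd : ∀ g n z, ‖χ g n z‖ ≤ 1 := by
    intro g n z
    simp only [hχ_def]
    split <;> simp
  have hχtop : ∀ (g : 𝕋 → ℂ), AEMeasurable g m → ∀ n, MemLp (χ g n) ⊤ m := by
    intro g hg n
    exact memLp_top_of_bound ((hχmeas g hg n).aestronglyMeasurable) 1
      (Filter.Eventually.of_forall (hχbd g n))
  have htrbd : ∀ g n z, ‖χ g n z * g z‖ ≤ n := by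
    intro g n z
    simp only [hχ_def]
    split
    · next h => simpa using h
    · simp
  have htrtop : ∀ (g : 𝕋 → ℂ), AEMeasurable g m → ∀ n, MemLp (χ g n * g) ⊤ m := by
    intro g hg n
    exact memLp_top_of_bound (((hχmeas g hg n).mul hg).aestronglyMeasurable) n
      (Filter.Eventually.of_forall (htrbd g n))
  -- the key identity `T g = f * g`
  have hTg : ∀ g : 𝕋 → ℂ, S g → T g =ᵐ[m] f * g := by
    intro g hg
    obtain ⟨hgm, hgfin⟩ := hS_sub g hg
    have e1 : ∀ n, T (χ g n * g) =ᵐ[m] χ g n * T g := fun n =>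
      hmod (χ g n) (hχtop g hgm n) g hg
    have e2 : ∀ n, T (χ g n * g) =ᵐ[m] (χ g n * g) * f := by
      intro n
      have h := hmod (χ g n * g) (htrtop g hgm n) 1 h1S
      rwa [mul_one] at h
    have e3 : ∀ᵐ z ∂m, ∀ n : ℕ, χ g n z * T g z = (χ g n z * g z) * f z := by
      rw [ae_all_iff]
      intro n
      filter_upwards [(e1 n).symm.trans (e2 n)] with z hz using hz
    filter_upwards [e3] with z hz
    have hn : ‖g z‖ ≤ (⌈‖g z‖⌉₊ : ℕ) := Nat.le_ceil _
    have hz' := hz ⌈‖g z‖⌉₊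
    simp only [hχ_def, if_pos hn, one_mul] at hz'
    simp only [Pi.mul_apply, hz', mul_comm]
  have key : ∀ g : 𝕋 → ℂ, S g →
      eLpNorm (T g) 1 m = ∫⁻ z, (‖f z * g z‖₊ : ℝ≥0∞) ∂m := by
    intro g hg
    rw [eLpNorm_congr_ae (hTg g hg), eLpNorm_one_eq_lintegral_enorm]
    rfl
  have hmain : (⨆ (g : 𝕋 → ℂ) (_ : S g) (_ : N.α g ≤ 1), eLpNorm (T g) 1 m)
      = dualOf N.α f := by
    apply le_antisymm
    · refine iSup_le fun g => iSup_le fun hg => iSup_le fun hα => ?_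
      obtain ⟨hgm, hgfin⟩ := hS_sub g hg
      rw [key g hg]
      -- monotone convergence
      have hmono : ∀ z : 𝕋, Monotone fun n : ℕ => (‖f z * (χ g n z * g z)‖₊ : ℝ≥0∞) := by
        intro z n k hnk
        simp only [hχ_def]
        by_cases h : ‖g z‖ ≤ n
        · rw [if_pos h, if_pos (h.trans (by exact_mod_cast Nat.cast_le.mpr hnk))]
        · rw [if_neg h]; simp
      have hsup : ∀ z : 𝕋, (⨆ n : ℕ, (‖f z * (χ g n z * g z)‖₊ : ℝ≥0∞))
          = (‖f z * g z‖₊ : ℝ≥0∞) := by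
        intro z
        apply le_antisymm
        · refine iSup_le fun n => ?_
          simp only [hχ_def]
          split
          · simp
          · simp
        · refine le_iSup_of_le ⌈‖g z‖⌉₊ ?_
          simp only [hχ_def, if_pos (Nat.le_ceil _), one_mul, le_refl]
      have hMCT : (∫⁻ z, (‖f z * g z‖₊ : ℝ≥0∞) ∂m)
          = ⨆ n : ℕ, ∫⁻ z, (‖f z * (χ g n z * g z)‖₊ : ℝ≥0∞) ∂m := by
        rw [← lintegral_iSup' (f := fun n z => (‖f z * (χ g n z * g z)‖₊ : ℝ≥0∞)) (fun n =>
          (hf_meas.mul ((hχmeas g hgm n).mul hgm)).nnnorm.coe_nnreal_ennreal)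
          (Filter.Eventually.of_forall hmono)]
        exact lintegral_congr fun z => (hsup z).symm
      rw [hMCT]
      refine iSup_le fun n => ?_
      have hαn : N.α (χ g n * g) ≤ 1 := by
        refine le_trans (alpha_mono N ((hχmeas g hgm n).mul hgm) hgm ?_) hα
        refine Filter.Eventually.of_forall fun z => ?_
        simp only [Pi.mul_apply, norm_mul]
        calc ‖χ g n z‖ * ‖g z‖ ≤ 1 * ‖g z‖ :=
              mul_le_mul_of_nonneg_right (hχbd g n z) (norm_nonneg _)
          _ = ‖g z‖ := one_mul _
      exact le_iSup_of_le (χ g n * g) (le_iSup_of_le (htrtop g hgm n)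
        (le_iSup_of_le hαn le_rfl))
    · refine iSup_le fun h => iSup_le fun hhtop => iSup_le fun hα => ?_
      have hhS : S h := hS_of_top h hhtop (by
        intro hc; rw [hc] at hα; exact (not_le.mpr (lt_top_iff_ne_top.mpr ENNReal.one_ne_top)) hα)
      rw [← key h hhS]
      exact le_iSup_of_le h (le_iSup_of_le hhS (le_iSup_of_le hα le_rfl))
  have hfin : dualOf N.α f ≠ ∞ := by
    obtain ⟨C, hC, hCb⟩ := hbdd
    rw [← hmain]
    refine ne_top_of_le_ne_top hC (iSup_le fun g => iSup_le fun hg => iSup_le fun hα => ?_)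
    calc eLpNorm (T g) 1 m ≤ C * N.α g := hCb g hg
      _ ≤ C * 1 := mul_le_mul_right hα C
      _ = C := mul_one C
  exact ⟨f, hf_meas, hfin, hTg, hmain⟩


end
end

section
/- (General Continuity Theorem) Suppose α is a continuous rotationally symmetric norm on L^∞(𝕋) and g ∈ L^α(𝕋). Then lim_{m(E)→0⁺} α(g·χ_E) = 0; that is, for every ε > 0 there is a δ > 0 such that for every measurable E ⊆ 𝕋 with m(E) < δ one has α(g·χ_E) < ε. -/
open MeasureTheory Filter
open scoped ENNReal Real

noncomputable section

lemma rotNorm_mono (N : RotNorm) {f h : 𝕋 → ℂ} (hf : AEMeasurable f m)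
    (hh : AEMeasurable h m) (hle : ∀ᵐ z ∂m, ‖f z‖ ≤ ‖h z‖) : N.α f ≤ N.α h := by
  rw [N.simple_sup f hf, N.simple_sup h hh]
  refine iSup_le fun s => iSup_le fun hs => ?_
  refine le_iSup_of_le s (le_iSup_of_le ?_ le_rfl)
  filter_upwards [hs, hle] with z h1 h2 using h1.trans h2

/-- **General Continuity Theorem.** If α is a continuous rotationally
symmetric norm and `g ∈ L^α(𝕋)`, then `α(g·χ_E) → 0` as `m(E) → 0⁺`. -/
theorem general_continuity
    (N : RotNorm) (hc : IsContNorm N.α)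
    (g : 𝕋 → ℂ) (hg : MemL N.α g) :
    ∀ ε : ℝ≥0∞, 0 < ε → ∃ δ : ℝ≥0∞, 0 < δ ∧
      ∀ E : Set 𝕋, MeasurableSet E → m E < δ → N.α (E.indicator g) < ε := by
  intro ε hε
  -- choose a finite positive η < ε
  set η : ℝ≥0∞ := min (ε / 2) 1 with hη
  have hη_pos : 0 < η := lt_min (ENNReal.div_pos hε.ne' (by norm_num)) one_pos
  have hη_lt : η < ε := by
    rcases eq_or_ne ε ∞ with h | h
    · exact lt_of_le_of_lt (min_le_right _ _) (by simp [h])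
    · exact lt_of_le_of_lt (min_le_left _ _)
        (ENNReal.half_lt_self hε.ne' h)
  have hη_ne : η ≠ ∞ := (lt_of_le_of_lt (min_le_right _ _) (by norm_num)).ne
  have hη2_pos : 0 < η / 2 := ENNReal.div_pos hη_pos.ne' (by norm_num)
  -- approximate g by a bounded g'
  obtain ⟨g', hg'bd, hg'close⟩ := hg.2 (η / 2) hη2_pos
  have hg'meas : AEMeasurable g' m := hg'bd.aestronglyMeasurable.aemeasurable
  have hgmeas : AEMeasurable g m := hg.1.1
  set C : NNReal := (eLpNorm g' ⊤ m).toNNReal with hC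
  have hg'ae : ∀ᵐ z ∂m, ‖g' z‖ ≤ (C : ℝ) := by
    have h1 : ∀ᵐ z ∂m, (‖g' z‖₊ : ℝ≥0∞) ≤ eLpNorm g' ⊤ m := by
      simpa [eLpNorm_exponent_top, enorm_eq_nnnorm] using ae_le_eLpNormEssSup (f := g') (μ := m)
    filter_upwards [h1] with z hz
    have : (‖g' z‖₊ : ℝ≥0∞) ≤ (C : ℝ≥0∞) := by
      rwa [hC, ENNReal.coe_toNNReal hg'bd.2.ne]
    exact_mod_cast this
  -- δ from continuity of the norm
  have hCne : ((C : ℝ≥0∞) + 1) ≠ ∞ := by simp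
  obtain ⟨δ, hδpos, hδ⟩ := hc ((η / 2) / ((C : ℝ≥0∞) + 1))
    (ENNReal.div_pos hη2_pos.ne' hCne)
  refine ⟨δ, hδpos, fun E hE hEδ => ?_⟩
  have key : N.α (E.indicator g) ≤ N.α (g - g') + N.α ((C : ℂ) • E.indicator fun _ => (1:ℂ)) := by
    have hsplit : E.indicator g = E.indicator (g - g') + E.indicator g' := by
      funext z
      by_cases hz : z ∈ E <;> simp [Set.indicator_of_mem, Set.indicator_of_notMem, hz]
    rw [hsplit]
    refine le_trans (N.add_le _ _) (add_le_add ?_ ?_)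
    · exact rotNorm_mono N ((hgmeas.sub hg'meas).indicator hE) (hgmeas.sub hg'meas)
        (Eventually.of_forall fun z => by
          by_cases hz : z ∈ E <;>
            simp [Set.indicator_of_mem, Set.indicator_of_notMem, hz])
    · refine rotNorm_mono N (hg'meas.indicator hE)
        (((aemeasurable_indicator_iff hE).2 aemeasurable_const).const_smul (C : ℂ)) ?_
      filter_upwards [hg'ae] with z hz
      by_cases hzE : z ∈ E
      · simpa [Set.indicator_of_mem, hzE] using hz
      · simp [Set.indicator_of_notMem, hzE]
  have hsmul : N.α ((C : ℂ) • E.indicator fun _ => (1:ℂ))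
      = (C : ℝ≥0∞) * N.α (E.indicator fun _ => (1:ℂ)) := by
    rw [N.smul_eq]
    congr 1
    simp
  have hbound2 : (C : ℝ≥0∞) * N.α (E.indicator fun _ => (1:ℂ)) ≤ η / 2 := by
    calc (C : ℝ≥0∞) * N.α (E.indicator fun _ => (1:ℂ))
        ≤ ((C : ℝ≥0∞) + 1) * ((η / 2) / ((C : ℝ≥0∞) + 1)) := by
          exact mul_le_mul (le_self_add) (le_of_lt (hδ E hE hEδ)) zero_le zero_le
      _ ≤ η / 2 := ENNReal.mul_div_le
  calc N.α (E.indicator g) ≤ N.α (g - g') + (C : ℝ≥0∞) * N.α (E.indicator fun _ => (1:ℂ)) := by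
        rw [← hsmul]; exact key
    _ < η / 2 + η / 2 := by
        exact ENNReal.add_lt_add_of_lt_of_le
          (ne_top_of_le_ne_top (ENNReal.div_lt_top hη_ne (by norm_num)).ne hbound2)
          hg'close hbound2
    _ = η := ENNReal.add_halves η
    _ < ε := hη_lt

end
end
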